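/- arXiv:cond-mat/0209157 — 9 statements merged into one kernel-verified Lean document; each statement's English description precedes it below -/
import Mathlib

section
/- Let J be a real symmetric N×N matrix with constant row sums j := ∑_ν J_{μν} (independent of μ), and let j_min be the smallest eigenvalue of J. Suppose s is a state with ∑_μ s_μ = 0 satisfying ∑_ν J_{μν} s_ν = j_min s_μ for all μ, and let n be a unit vector with ⟨n, s_μ⟩ = 0 for all μ. Then for every 0 ≤ S ≤ N the state ŝ_μ(S) := √(1 − S²/N²)·s_μ + (S/N)·n is a relative ground state: its energy is H₀(ŝ(S)) = ((j − j_min)/N)·S² + j_min·N, and every state t with ‖∑_μ t_μ‖ = S satisfies H₀(t) ≥ ((j − j_min)/N)·S² + j_min·N. -/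
open scoped RealInnerProductSpace

/-- The energy of a classical Heisenberg spin state. -/
noncomputable def heisenbergEnergy {N : ℕ} (J : Matrix (Fin N) (Fin N) ℝ)
    (s : Fin N → EuclideanSpace ℝ (Fin 3)) : ℝ :=
  ∑ μ, ∑ ν, J μ ν * ⟪s μ, s ν⟫

open Matrix in
private lemma quad_key {N : ℕ} (J : Matrix (Fin N) (Fin N) ℝ) (hJ : J.IsSymm)
    (jmin : ℝ)
    (hle : ∀ x : ℝ, Module.End.HasEigenvalue (Matrix.toLin' J) x → jmin ≤ x)
    (v : Fin N → ℝ) :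
    jmin * (∑ μ, v μ * v μ) ≤ ∑ μ, ∑ ν, J μ ν * (v μ * v ν) := by
  have hH : J.IsHermitian := by
    rw [Matrix.IsHermitian, Matrix.conjTranspose_eq_transpose_of_trivial]; exact hJ
  set A : Matrix (Fin N) (Fin N) ℝ := J - jmin • 1 with hAdef
  have hAH : A.IsHermitian := by
    rw [Matrix.IsHermitian, Matrix.conjTranspose_eq_transpose_of_trivial, hAdef]
    rw [Matrix.transpose_sub, hJ, Matrix.transpose_smul, Matrix.transpose_one]
  have hpsd : A.PosSemidef := by
    apply hAH.posSemidef_iff_eigenvalues_nonneg.mpr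
    intro i; rw [Pi.zero_apply]
    have hx := hAH.mulVec_eigenvectorBasis i
    set x : Fin N → ℝ := ⇑(hAH.eigenvectorBasis i) with hxdef
    have hx0 : x ≠ 0 := by
      intro h
      have h1 := hAH.eigenvectorBasis.orthonormal.1 i
      have : hAH.eigenvectorBasis i = 0 := by
        ext k; exact congrFun h k
      rw [this] at h1; simp at h1
    have hJx : J *ᵥ x = (hAH.eigenvalues i + jmin) • x := by
      have : A *ᵥ x = J *ᵥ x - jmin • x := by
        rw [hAdef, Matrix.sub_mulVec, Matrix.smul_mulVec, Matrix.one_mulVec]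
      rw [this] at hx
      rw [add_smul]
      rw [sub_eq_iff_eq_add] at hx
      rw [hx]
    have hev : Module.End.HasEigenvalue (Matrix.toLin' J) (hAH.eigenvalues i + jmin) := by
      apply Module.End.hasEigenvalue_of_hasEigenvector (x := x)
      constructor
      · rw [Module.End.mem_eigenspace_iff, Matrix.toLin'_apply, hJx]
      · exact hx0
    have := hle _ hev
    linarith
  have h0 := hpsd.dotProduct_mulVec_nonneg v
  have hexp : dotProduct (star v) (A *ᵥ v)
      = (∑ μ, ∑ ν, J μ ν * (v μ * v ν)) - jmin * (∑ μ, v μ * v μ) := by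
    have hAv : A *ᵥ v = J *ᵥ v - jmin • v := by
      rw [hAdef, Matrix.sub_mulVec, Matrix.smul_mulVec, Matrix.one_mulVec]
    rw [hAv]
    simp only [star_trivial, dotProduct_sub, dotProduct_smul]
    congr 1
    simp only [dotProduct, Matrix.mulVec, Finset.mul_sum]
    refine Finset.sum_congr rfl fun μ _ => Finset.sum_congr rfl fun ν _ => by ring
  rw [hexp] at h0
  linarith

private lemma quad_key2 {N : ℕ} (J : Matrix (Fin N) (Fin N) ℝ) (hJ : J.IsSymm)
    (j : ℝ) (hrow : ∀ μ, ∑ ν, J μ ν = j) (jmin : ℝ)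
    (hle : ∀ x : ℝ, Module.End.HasEigenvalue (Matrix.toLin' J) x → jmin ≤ x)
    (hN : 0 < N) (v : Fin N → ℝ) :
    jmin * (∑ μ, v μ * v μ) + (j - jmin) * (∑ μ, v μ) ^ 2 / N
      ≤ ∑ μ, ∑ ν, J μ ν * (v μ * v ν) := by
  have hNR : (0:ℝ) < N := by exact_mod_cast hN
  have hcol : ∀ ν, ∑ μ, J μ ν = j := by
    intro ν
    rw [← hrow ν]
    exact Finset.sum_congr rfl fun μ _ => congrFun (congrFun hJ ν) μ
  set c : ℝ := ∑ μ, v μ with hc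
  set a : ℝ := c / N with ha
  set w : Fin N → ℝ := fun μ => v μ - a with hw
  have key := quad_key J hJ jmin hle w
  have h1 : ∑ μ, w μ * w μ = (∑ μ, v μ * v μ) - 2 * a * c + N * a ^ 2 := by
    have : ∀ μ, w μ * w μ = v μ * v μ - 2 * a * v μ + a ^ 2 := fun μ => by
      simp only [hw]; ring
    rw [Finset.sum_congr rfl fun μ _ => this μ]
    rw [Finset.sum_add_distrib, Finset.sum_sub_distrib, ← Finset.mul_sum, ← hc]
    simp [Finset.sum_const, Finset.card_fin]
  have hT1 : ∑ μ, ∑ ν, J μ ν * v ν = j * c := by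
    rw [Finset.sum_comm]
    have : ∀ ν, ∑ μ, J μ ν * v ν = j * v ν := fun ν => by
      rw [← Finset.sum_mul, hcol]
    rw [Finset.sum_congr rfl fun ν _ => this ν, ← Finset.mul_sum]
  have hT2 : ∑ μ, ∑ ν, J μ ν * v μ = j * c := by
    have : ∀ μ, ∑ ν, J μ ν * v μ = j * v μ := fun μ => by
      rw [← Finset.sum_mul, hrow]
    rw [Finset.sum_congr rfl fun μ _ => this μ, ← Finset.mul_sum]
  have hT3 : ∑ μ : Fin N, ∑ ν, J μ ν = N * j := by
    rw [Finset.sum_congr rfl fun μ _ => hrow μ]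
    simp [Finset.sum_const, Finset.card_fin, mul_comm]
  have h2 : ∑ μ, ∑ ν, J μ ν * (w μ * w ν)
      = (∑ μ, ∑ ν, J μ ν * (v μ * v ν)) - a * (j * c) - a * (j * c) + a ^ 2 * (N * j) := by
    have : ∀ μ ν, J μ ν * (w μ * w ν)
        = J μ ν * (v μ * v ν) - a * (J μ ν * v ν) - a * (J μ ν * v μ) + a ^ 2 * J μ ν := by
      intro μ ν; simp only [hw]; ring
    calc ∑ μ, ∑ ν, J μ ν * (w μ * w ν)
        = ∑ μ, ∑ ν, (J μ ν * (v μ * v ν) - a * (J μ ν * v ν) - a * (J μ ν * v μ)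
            + a ^ 2 * J μ ν) := by
          exact Finset.sum_congr rfl fun μ _ => Finset.sum_congr rfl fun ν _ => this μ ν
      _ = (∑ μ, ∑ ν, J μ ν * (v μ * v ν)) - a * (∑ μ, ∑ ν, J μ ν * v ν)
            - a * (∑ μ, ∑ ν, J μ ν * v μ) + a ^ 2 * (∑ μ : Fin N, ∑ ν, J μ ν) := by
          simp only [Finset.sum_add_distrib, Finset.sum_sub_distrib, ← Finset.mul_sum]
      _ = _ := by rw [hT1, hT2, hT3]
  rw [h1, h2] at key
  have e : jmin * (∑ μ, v μ * v μ) + (j - jmin) * (∑ μ, v μ) ^ 2 / N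
        - (∑ μ, ∑ ν, J μ ν * (v μ * v ν))
      = jmin * ((∑ μ, v μ * v μ) - 2 * a * c + N * a ^ 2)
        - ((∑ μ, ∑ ν, J μ ν * (v μ * v ν)) - a * (j * c) - a * (j * c) + a ^ 2 * (N * j)) := by
    rw [ha, ← hc]
    field_simp
    ring
  linarith [key, e]

private lemma inner_eq_sum3 (x y : EuclideanSpace ℝ (Fin 3)) : ⟪x, y⟫ = ∑ a, x a * y a := by
  simp [PiLp.inner_apply, RCLike.inner_apply, conj_trivial]
  exact Finset.sum_congr rfl fun _ _ => mul_comm _ _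

private lemma energy_eq {N : ℕ} (J : Matrix (Fin N) (Fin N) ℝ)
    (t : Fin N → EuclideanSpace ℝ (Fin 3)) :
    heisenbergEnergy J t = ∑ a : Fin 3, ∑ μ, ∑ ν, J μ ν * (t μ a * t ν a) := by
  unfold heisenbergEnergy
  have : ∀ μ ν, J μ ν * ⟪t μ, t ν⟫ = ∑ a, J μ ν * (t μ a * t ν a) := by
    intro μ ν; rw [inner_eq_sum3, Finset.mul_sum]
  rw [Finset.sum_congr rfl fun μ _ => Finset.sum_congr rfl fun ν _ => this μ ν]
  exact (Finset.sum_congr rfl fun μ _ => Finset.sum_comm).trans Finset.sum_comm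

theorem tilted_states_are_relative_ground_states {N : ℕ}
    (J : Matrix (Fin N) (Fin N) ℝ) (hJ : J.IsSymm)
    (j : ℝ) (hrow : ∀ μ, ∑ ν, J μ ν = j)
    (jmin : ℝ)
    (hjmin : Module.End.HasEigenvalue (Matrix.toLin' J) jmin)
    (hjmin_le : ∀ x : ℝ, Module.End.HasEigenvalue (Matrix.toLin' J) x → jmin ≤ x)
    (s : Fin N → EuclideanSpace ℝ (Fin 3)) (hstate : ∀ μ, ‖s μ‖ = 1)
    (hsum : ∑ μ, s μ = 0)
    (heig : ∀ μ, ∑ ν, J μ ν • s ν = jmin • s μ)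
    (n : EuclideanSpace ℝ (Fin 3)) (hn : ‖n‖ = 1)
    (horth : ∀ μ, ⟪n, s μ⟫ = 0)
    (S : ℝ) (hS0 : 0 ≤ S) (hSN : S ≤ N) :
    (∀ μ, ‖Real.sqrt (1 - S ^ 2 / (N : ℝ) ^ 2) • s μ + (S / N) • n‖ = 1) ∧
      heisenbergEnergy J
          (fun μ => Real.sqrt (1 - S ^ 2 / (N : ℝ) ^ 2) • s μ + (S / N) • n) =
        (j - jmin) / N * S ^ 2 + jmin * N ∧
      ∀ t : Fin N → EuclideanSpace ℝ (Fin 3), (∀ μ, ‖t μ‖ = 1) →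
        ‖∑ μ, t μ‖ = S →
        (j - jmin) / N * S ^ 2 + jmin * N ≤ heisenbergEnergy J t := by
  rcases Nat.eq_zero_or_pos N with hN0 | hN
  · subst hN0
    have hS : S = 0 := le_antisymm (by simpa using hSN) hS0
    subst hS
    refine ⟨fun μ => μ.elim0, ?_, ?_⟩
    · simp [heisenbergEnergy]
    · intro t _ _
      simp [heisenbergEnergy]
  have hNR : (0:ℝ) < N := by exact_mod_cast hN
  have hNne : (N:ℝ) ≠ 0 := ne_of_gt hNR
  have hfrac : S ^ 2 / (N:ℝ) ^ 2 ≤ 1 := by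
    rw [div_le_one (by positivity)]
    nlinarith
  have h1m : 0 ≤ 1 - S ^ 2 / (N:ℝ) ^ 2 := by linarith
  have hα2 : Real.sqrt (1 - S ^ 2 / (N:ℝ) ^ 2) ^ 2 = 1 - S ^ 2 / (N:ℝ) ^ 2 :=
    Real.sq_sqrt h1m
  set α : ℝ := Real.sqrt (1 - S ^ 2 / (N:ℝ) ^ 2) with hαdef
  set β : ℝ := S / N with hβdef
  have hβ2 : β ^ 2 = S ^ 2 / (N:ℝ) ^ 2 := by rw [hβdef]; rw [div_pow]
  -- part 1
  have part1 : ∀ μ, ‖α • s μ + β • n‖ = 1 := by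
    intro μ
    have hsq : ‖α • s μ + β • n‖ ^ 2 = 1 := by
      rw [norm_add_sq_real, real_inner_smul_left, real_inner_smul_right,
        real_inner_comm, horth μ]
      simp only [norm_smul, hstate μ, hn, mul_one, mul_zero]
      rw [Real.norm_eq_abs, Real.norm_eq_abs, sq_abs, sq_abs, hα2, hβ2]
      ring
    nlinarith [norm_nonneg (α • s μ + β • n), hsq]
  refine ⟨part1, ?_, ?_⟩
  -- part 2
  · have HS : ∑ μ, ∑ ν, J μ ν * ⟪s μ, s ν⟫ = (N:ℝ) * jmin := by
      have hμ : ∀ μ, ∑ ν, J μ ν * ⟪s μ, s ν⟫ = jmin := by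
        intro μ
        have : ∑ ν, J μ ν * ⟪s μ, s ν⟫ = ⟪s μ, ∑ ν, J μ ν • s ν⟫ := by
          rw [inner_sum]
          exact Finset.sum_congr rfl fun ν _ => (real_inner_smul_right _ _ _).symm
        rw [this, heig μ, real_inner_smul_right, real_inner_self_eq_norm_sq, hstate μ]
        norm_num
      rw [Finset.sum_congr rfl fun μ _ => hμ μ]
      simp [Finset.sum_const, Finset.card_fin, mul_comm]
    have HJ : ∑ μ : Fin N, ∑ ν, J μ ν = (N:ℝ) * j := by
      rw [Finset.sum_congr rfl fun μ _ => hrow μ]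
      simp [Finset.sum_const, Finset.card_fin, mul_comm]
    have hinner : ∀ μ ν, ⟪α • s μ + β • n, α • s ν + β • n⟫
        = α ^ 2 * ⟪s μ, s ν⟫ + β ^ 2 := by
      intro μ ν
      have hms : ⟪s μ, n⟫ = 0 := by rw [real_inner_comm]; exact horth μ
      have hnn : ⟪n, n⟫ = (1:ℝ) := by
        rw [real_inner_self_eq_norm_sq, hn]; norm_num
      simp only [inner_add_left, inner_add_right, real_inner_smul_left,
        real_inner_smul_right, horth ν, hms, hnn, mul_zero, zero_mul, mul_one]
      ring
    calc heisenbergEnergy J (fun μ => α • s μ + β • n)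
        = ∑ μ, ∑ ν, (α ^ 2 * (J μ ν * ⟪s μ, s ν⟫) + β ^ 2 * J μ ν) := by
          unfold heisenbergEnergy
          refine Finset.sum_congr rfl fun μ _ => Finset.sum_congr rfl fun ν _ => ?_
          rw [hinner μ ν]; ring
      _ = α ^ 2 * (∑ μ, ∑ ν, J μ ν * ⟪s μ, s ν⟫) + β ^ 2 * (∑ μ : Fin N, ∑ ν, J μ ν) := by
          simp only [Finset.sum_add_distrib, ← Finset.mul_sum]
      _ = (1 - S ^ 2 / (N:ℝ) ^ 2) * ((N:ℝ) * jmin) + S ^ 2 / (N:ℝ) ^ 2 * ((N:ℝ) * j) := by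
          rw [HS, HJ, hα2, hβ2]
      _ = (j - jmin) / N * S ^ 2 + jmin * N := by
          field_simp
          ring
  -- part 3
  · intro t ht hTsum
    have hptwise : ∀ μ, ∑ a, t μ a * t μ a = 1 := by
      intro μ
      rw [← inner_eq_sum3, real_inner_self_eq_norm_sq, ht μ]
      norm_num
    have hAsum : ∑ a : Fin 3, ∑ μ, t μ a * t μ a = (N:ℝ) := by
      rw [Finset.sum_comm, Finset.sum_congr rfl fun μ _ => hptwise μ]
      simp [Finset.sum_const, Finset.card_fin]
    have hBsum : ∑ a : Fin 3, (∑ μ, t μ a) ^ 2 = S ^ 2 := by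
      have h1 : ⟪∑ μ, t μ, ∑ μ, t μ⟫ = S ^ 2 := by
        rw [real_inner_self_eq_norm_sq, hTsum]
      rw [inner_eq_sum3] at h1
      rw [← h1]
      refine Finset.sum_congr rfl fun a _ => ?_
      have : (∑ μ, t μ) a = ∑ μ, t μ a := by
        rw [WithLp.ofLp_sum]; exact Finset.sum_apply a Finset.univ fun μ => t μ
      rw [this]; ring
    have key : ∀ a : Fin 3,
        jmin * (∑ μ, t μ a * t μ a) + (j - jmin) * (∑ μ, t μ a) ^ 2 / N
          ≤ ∑ μ, ∑ ν, J μ ν * (t μ a * t ν a) :=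
      fun a => quad_key2 J hJ j hrow jmin hjmin_le hN (fun μ => t μ a)
    have hsumle := Finset.sum_le_sum (fun a (_ : a ∈ Finset.univ) => key a)
    rw [energy_eq]
    refine le_trans (le_of_eq ?_) hsumle
    rw [Finset.sum_add_distrib, ← Finset.mul_sum, hAsum, ← Finset.sum_div,
      ← Finset.mul_sum, hBsum]
    ring
end

section
/- Let J be a real symmetric N×N matrix with constant row sums j := ∑_ν J_{μν} (independent of μ), and let j_maxi be the largest eigenvalue of the quadratic form x ↦ ⟨x, Jx⟩ restricted to the hyperplane {x ∈ ℝ^N : ∑_μ x_μ = 0}. Suppose s is a state with ∑_μ s_μ = 0 satisfying ∑_ν J_{μν} s_ν = j_maxi s_μ for all μ, and let n be a unit vector with ⟨n, s_μ⟩ = 0 for all μ. Then for every 0 ≤ S ≤ N the state ŝ_μ(S) := √(1 − S²/N²)·s_μ + (S/N)·n is a relative anti-ground state: its energy is H₀(ŝ(S)) = ((j − j_maxi)/N)·S² + j_maxi·N, and every state t with ‖∑_μ t_μ‖ = S satisfies H₀(t) ≤ ((j − j_maxi)/N)·S² + j_maxi·N. -/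
open scoped RealInnerProductSpace

theorem tilted_states_are_relative_anti_ground_states {N : ℕ}
    (J : Matrix (Fin N) (Fin N) ℝ) (hJ : J.IsSymm)
    (j : ℝ) (hrow : ∀ μ, ∑ ν, J μ ν = j)
    (jmaxi : ℝ)
    -- `jmaxi` is the largest eigenvalue of the quadratic form `x ↦ ⟨x, Jx⟩`
    -- restricted to the hyperplane `{x | ∑ μ, x μ = 0}` (Rayleigh characterization):
    (hmaxi_le : ∀ x : Fin N → ℝ, (∑ μ, x μ) = 0 →
      ∑ μ, ∑ ν, x μ * J μ ν * x ν ≤ jmaxi * ∑ μ, x μ ^ 2)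
    (hmaxi_attained : ∃ x : Fin N → ℝ, x ≠ 0 ∧ (∑ μ, x μ) = 0 ∧
      ∑ μ, ∑ ν, x μ * J μ ν * x ν = jmaxi * ∑ μ, x μ ^ 2)
    (s : Fin N → EuclideanSpace ℝ (Fin 3)) (hstate : ∀ μ, ‖s μ‖ = 1)
    (hsum : ∑ μ, s μ = 0)
    (heig : ∀ μ, ∑ ν, J μ ν • s ν = jmaxi • s μ)
    (n : EuclideanSpace ℝ (Fin 3)) (hn : ‖n‖ = 1)
    (horth : ∀ μ, ⟪n, s μ⟫ = 0)
    (S : ℝ) (hS0 : 0 ≤ S) (hSN : S ≤ N) :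
    (∀ μ, ‖Real.sqrt (1 - S ^ 2 / (N : ℝ) ^ 2) • s μ + (S / N) • n‖ = 1) ∧
      heisenbergEnergy J
          (fun μ => Real.sqrt (1 - S ^ 2 / (N : ℝ) ^ 2) • s μ + (S / N) • n) =
        (j - jmaxi) / N * S ^ 2 + jmaxi * N ∧
      ∀ t : Fin N → EuclideanSpace ℝ (Fin 3), (∀ μ, ‖t μ‖ = 1) →
        ‖∑ μ, t μ‖ = S →
        heisenbergEnergy J t ≤ (j - jmaxi) / N * S ^ 2 + jmaxi * N := by
  -- N is positive
  have hNpos : 0 < N := by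
    rcases Nat.eq_zero_or_pos N with h | h
    · obtain ⟨x, hx, -, -⟩ := hmaxi_attained
      subst h
      exact absurd (funext fun i => i.elim0) hx
    · exact h
  have hN0 : (N : ℝ) ≠ 0 := by positivity
  have hNR : (0:ℝ) < N := by exact_mod_cast hNpos
  set a : ℝ := Real.sqrt (1 - S ^ 2 / (N : ℝ) ^ 2) with ha
  set b : ℝ := S / N with hb
  have hS2 : S ^ 2 ≤ (N : ℝ) ^ 2 := by nlinarith
  have hnonneg : 0 ≤ 1 - S ^ 2 / (N : ℝ) ^ 2 := by
    rw [sub_nonneg, div_le_one (by positivity)]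
    exact hS2
  have ha2 : a ^ 2 = 1 - S ^ 2 / (N : ℝ) ^ 2 := Real.sq_sqrt hnonneg
  have hb2 : b ^ 2 = S ^ 2 / (N : ℝ) ^ 2 := by rw [hb, div_pow]
  have hnn : ⟪n, n⟫ = 1 := by rw [real_inner_self_eq_norm_sq, hn]; norm_num
  -- inner product of tilted states
  have hip : ∀ μ ν, ⟪a • s μ + b • n, a • s ν + b • n⟫ = a ^ 2 * ⟪s μ, s ν⟫ + b ^ 2 := by
    intro μ ν
    have h1 : ⟪s μ, n⟫ = 0 := by rw [real_inner_comm]; exact horth μ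
    simp only [inner_add_left, inner_add_right, real_inner_smul_left, real_inner_smul_right,
      h1, horth ν, hnn]
    ring
  -- norms of tilted states
  have hnorm : ∀ μ, ‖a • s μ + b • n‖ = 1 := by
    intro μ
    have h1 : ‖a • s μ + b • n‖ ^ 2 = 1 := by
      rw [← real_inner_self_eq_norm_sq, hip μ μ, real_inner_self_eq_norm_sq, hstate μ,
        ha2, hb2]
      field_simp; ring
    rw [← Real.sqrt_sq (norm_nonneg _), h1, Real.sqrt_one]
  refine ⟨hnorm, ?_, ?_⟩
  · -- energy of tilted states
    have h1 : ∀ μ, ∑ ν, J μ ν * ⟪s μ, s ν⟫ = jmaxi := by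
      intro μ
      have : ∑ ν, J μ ν * ⟪s μ, s ν⟫ = ⟪s μ, ∑ ν, J μ ν • s ν⟫ := by
        rw [inner_sum]
        exact Finset.sum_congr rfl fun ν _ => (real_inner_smul_right _ _ _).symm
      rw [this, heig μ, real_inner_smul_right, real_inner_self_eq_norm_sq, hstate μ]
      norm_num
    unfold heisenbergEnergy
    have h2 : ∀ μ ν, J μ ν * ⟪a • s μ + b • n, a • s ν + b • n⟫
        = a ^ 2 * (J μ ν * ⟪s μ, s ν⟫) + b ^ 2 * J μ ν := by
      intro μ ν; rw [hip μ ν]; ring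
    calc ∑ μ, ∑ ν, J μ ν * ⟪a • s μ + b • n, a • s ν + b • n⟫
        = ∑ μ, ∑ ν, (a ^ 2 * (J μ ν * ⟪s μ, s ν⟫) + b ^ 2 * J μ ν) := by
          exact Finset.sum_congr rfl fun μ _ => Finset.sum_congr rfl fun ν _ => h2 μ ν
      _ = ∑ μ, (a ^ 2 * (∑ ν, J μ ν * ⟪s μ, s ν⟫) + b ^ 2 * ∑ ν, J μ ν) := by
          exact Finset.sum_congr rfl fun μ _ => by
            rw [Finset.sum_add_distrib, Finset.mul_sum, Finset.mul_sum]
      _ = ∑ μ : Fin N, (a ^ 2 * jmaxi + b ^ 2 * j) := by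
          exact Finset.sum_congr rfl fun μ _ => by rw [h1 μ, hrow μ]
      _ = N * (a ^ 2 * jmaxi + b ^ 2 * j) := by
          rw [Finset.sum_const, Finset.card_univ, Fintype.card_fin, nsmul_eq_mul]
      _ = (j - jmaxi) / N * S ^ 2 + jmaxi * N := by
          rw [ha2, hb2]; field_simp; ring
  · -- upper bound for arbitrary states
    intro t ht htS
    have hinner : ∀ u v : EuclideanSpace ℝ (Fin 3), ⟪u, v⟫ = ∑ i, u i * v i := by
      intro u v; simp [PiLp.inner_apply, RCLike.inner_apply]; exact Finset.sum_congr rfl fun i _ => mul_comm _ _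
    -- the key quadratic form inequality for arbitrary real vectors
    have key : ∀ x : Fin N → ℝ, ∑ μ, ∑ ν, x μ * J μ ν * x ν
        ≤ jmaxi * (∑ μ, x μ ^ 2) + (j - jmaxi) * ((∑ μ, x μ) ^ 2 / N) := by
      intro x
      set T : ℝ := ∑ μ, x μ with hT
      set c : ℝ := T / N with hc
      set y : Fin N → ℝ := fun μ => x μ - c with hy
      have hysum : ∑ μ, y μ = 0 := by
        simp only [hy, Finset.sum_sub_distrib, Finset.sum_const, Finset.card_univ,
          Fintype.card_fin, nsmul_eq_mul, ← hT, hc]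
        field_simp; ring
      have hcol : ∀ ν, ∑ μ, J μ ν = j := by
        intro ν
        rw [Finset.sum_congr rfl fun μ _ => hJ.apply ν μ]
        exact hrow ν
      have hB : ∑ μ, ∑ ν, (c * y ν) * J μ ν = 0 := by
        rw [Finset.sum_comm]
        have : ∀ ν, ∑ μ, (c * y ν) * J μ ν = (c * j) * y ν := by
          intro ν; rw [← Finset.mul_sum, hcol ν]; ring
        rw [Finset.sum_congr rfl fun ν _ => this ν, ← Finset.mul_sum, hysum, mul_zero]
      have hC : ∑ μ, ∑ ν, (y μ * c) * J μ ν = 0 := by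
        have : ∀ μ, ∑ ν, (y μ * c) * J μ ν = (c * j) * y μ := by
          intro μ; rw [← Finset.mul_sum, hrow μ]; ring
        rw [Finset.sum_congr rfl fun μ _ => this μ, ← Finset.mul_sum, hysum, mul_zero]
      have hD : ∑ μ, ∑ ν, (c * c) * J μ ν = j * (T ^ 2 / N) := by
        have : ∀ μ : Fin N, ∑ ν, (c * c) * J μ ν = c * c * j := by
          intro μ; rw [← Finset.mul_sum, hrow μ]
        rw [Finset.sum_congr rfl fun μ _ => this μ, Finset.sum_const, Finset.card_univ,
          Fintype.card_fin, nsmul_eq_mul, hc]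
        field_simp
      have hexp : ∑ μ, ∑ ν, x μ * J μ ν * x ν
          = (∑ μ, ∑ ν, y μ * J μ ν * y ν) + j * (T ^ 2 / N) := by
        have h1 : ∀ μ ν, x μ * J μ ν * x ν
            = y μ * J μ ν * y ν + (c * y ν) * J μ ν + (y μ * c) * J μ ν + (c * c) * J μ ν := by
          intro μ ν
          have hxμ : x μ = y μ + c := by simp [hy]
          have hxν : x ν = y ν + c := by simp [hy]
          rw [hxμ, hxν]; ring
        calc ∑ μ, ∑ ν, x μ * J μ ν * x ν
            = ∑ μ, ∑ ν, (y μ * J μ ν * y ν + (c * y ν) * J μ ν + (y μ * c) * J μ ν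
                + (c * c) * J μ ν) :=
              Finset.sum_congr rfl fun μ _ => Finset.sum_congr rfl fun ν _ => h1 μ ν
          _ = (∑ μ, ∑ ν, y μ * J μ ν * y ν) + (∑ μ, ∑ ν, (c * y ν) * J μ ν)
              + (∑ μ, ∑ ν, (y μ * c) * J μ ν) + (∑ μ, ∑ ν, (c * c) * J μ ν) := by
              simp [Finset.sum_add_distrib]
          _ = (∑ μ, ∑ ν, y μ * J μ ν * y ν) + j * (T ^ 2 / N) := by
              rw [hB, hC, hD]; ring
      have hysq : ∑ μ, y μ ^ 2 = (∑ μ, x μ ^ 2) - T ^ 2 / N := by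
        have h1 : ∀ μ, y μ ^ 2 = x μ ^ 2 - (2 * c) * x μ + c ^ 2 := by
          intro μ; simp only [hy]; ring
        rw [Finset.sum_congr rfl fun μ _ => h1 μ]
        simp only [Finset.sum_add_distrib, Finset.sum_sub_distrib, Finset.sum_const,
          Finset.card_univ, Fintype.card_fin, nsmul_eq_mul, ← Finset.mul_sum, ← hT, hc]
        field_simp; ring
      have hle := hmaxi_le y hysum
      have h2 : jmaxi * ∑ μ, y μ ^ 2 = jmaxi * (∑ μ, x μ ^ 2) - jmaxi * (T ^ 2 / N) := by
        rw [hysq]; ring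
      have h3 : (j - jmaxi) * (T ^ 2 / N) = j * (T ^ 2 / N) - jmaxi * (T ^ 2 / N) := by ring
      rw [hexp]
      linarith [hle, h2, h3]
    -- rewrite the energy coordinatewise
    have hE : heisenbergEnergy J t = ∑ i : Fin 3, ∑ μ, ∑ ν, t μ i * J μ ν * t ν i := by
      unfold heisenbergEnergy
      calc ∑ μ, ∑ ν, J μ ν * ⟪t μ, t ν⟫
          = ∑ μ, ∑ ν, ∑ i : Fin 3, t μ i * J μ ν * t ν i := by
            refine Finset.sum_congr rfl fun μ _ => Finset.sum_congr rfl fun ν _ => ?_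
            rw [hinner, Finset.mul_sum]
            exact Finset.sum_congr rfl fun i _ => by ring
        _ = ∑ μ, ∑ i : Fin 3, ∑ ν, t μ i * J μ ν * t ν i :=
            Finset.sum_congr rfl fun μ _ => Finset.sum_comm
        _ = ∑ i : Fin 3, ∑ μ, ∑ ν, t μ i * J μ ν * t ν i := Finset.sum_comm
    have hnorm1 : ∑ i : Fin 3, ∑ μ, (t μ i) ^ 2 = N := by
      rw [Finset.sum_comm]
      have h1 : ∀ μ, ∑ i : Fin 3, (t μ i) ^ 2 = 1 := by
        intro μ
        have : ∑ i : Fin 3, t μ i * t μ i = ⟪t μ, t μ⟫ := (hinner _ _).symm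
        calc ∑ i : Fin 3, (t μ i) ^ 2 = ∑ i : Fin 3, t μ i * t μ i :=
              Finset.sum_congr rfl fun i _ => sq (t μ i)
          _ = ⟪t μ, t μ⟫ := this
          _ = 1 := by rw [real_inner_self_eq_norm_sq, ht μ]; norm_num
      rw [Finset.sum_congr rfl fun μ _ => h1 μ, Finset.sum_const, Finset.card_univ,
        Fintype.card_fin, nsmul_eq_mul, mul_one]
    have hnorm2 : ∑ i : Fin 3, (∑ μ, t μ i) ^ 2 = S ^ 2 := by
      have hap : ∀ i : Fin 3, (∑ μ, t μ) i = ∑ μ, t μ i := fun i =>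
        by rw [WithLp.ofLp_sum]; exact Finset.sum_apply i Finset.univ fun c => t c
      calc ∑ i : Fin 3, (∑ μ, t μ i) ^ 2
          = ∑ i : Fin 3, ((∑ μ, t μ) i) * ((∑ μ, t μ) i) := by
            refine Finset.sum_congr rfl fun i _ => ?_
            rw [hap i]; ring
        _ = ⟪∑ μ, t μ, ∑ μ, t μ⟫ := (hinner _ _).symm
        _ = S ^ 2 := by rw [real_inner_self_eq_norm_sq, htS]
    rw [hE]
    calc ∑ i : Fin 3, ∑ μ, ∑ ν, t μ i * J μ ν * t ν i
        ≤ ∑ i : Fin 3, (jmaxi * (∑ μ, (t μ i) ^ 2) + (j - jmaxi) * ((∑ μ, t μ i) ^ 2 / N)) :=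
          Finset.sum_le_sum fun i _ => key (fun μ => t μ i)
      _ = jmaxi * (∑ i : Fin 3, ∑ μ, (t μ i) ^ 2)
          + (j - jmaxi) * ((∑ i : Fin 3, (∑ μ, t μ i) ^ 2) / N) := by
          rw [Finset.sum_add_distrib, ← Finset.mul_sum, ← Finset.mul_sum, ← Finset.sum_div]
      _ = (j - jmaxi) / N * S ^ 2 + jmaxi * N := by
          rw [hnorm1, hnorm2]; ring
end

section
/- Let J be a real symmetric N×N matrix with constant row sums j := ∑_ν J_{μν} (independent of μ), and let j_min be the smallest eigenvalue of J. Then every state s satisfies the lower bounding parabola H₀(s) ≥ ((j − j_min)/N)·‖∑_μ s_μ‖² + j_min·N. -/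
open scoped RealInnerProductSpace

lemma quad_bound {N : ℕ} (hN : 0 < N) (K : Matrix (Fin N) (Fin N) ℝ)
    (hPSD : K.PosSemidef) (hsym : ∀ μ ν, K μ ν = K ν μ) (r : ℝ)
    (hrow : ∀ μ, ∑ ν, K μ ν = r) (x : Fin N → ℝ) :
    r / N * (∑ μ, x μ) ^ 2 ≤ ∑ μ, ∑ ν, K μ ν * x μ * x ν := by
  have hNR : (0 : ℝ) < N := by exact_mod_cast hN
  set S := ∑ μ, x μ with hS
  set c := S / N with hc
  have e1 : ∀ (y : Fin N → ℝ), dotProduct y (K.mulVec y)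
      = ∑ μ, ∑ ν, K μ ν * y μ * y ν := by
    intro y
    simp only [Matrix.mulVec, dotProduct, Finset.mul_sum]
    exact Finset.sum_congr rfl fun μ _ => Finset.sum_congr rfl fun ν _ => by ring
  have hpos := hPSD.dotProduct_mulVec_nonneg (fun μ => x μ - c)
  simp only [star_trivial] at hpos
  rw [e1] at hpos
  have h1 : ∑ μ, ∑ ν, K μ ν * x μ = r * S := by
    have : ∀ μ, ∑ ν, K μ ν * x μ = x μ * r := by
      intro μ
      rw [← Finset.sum_mul, hrow μ]; ring
    simp_rw [this]
    rw [← Finset.sum_mul]; ring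
  have h2 : ∑ μ, ∑ ν, K μ ν * x ν = r * S := by
    rw [Finset.sum_comm]
    have : ∀ ν, ∑ μ, K μ ν * x ν = x ν * r := by
      intro ν
      have : ∀ μ, K μ ν = K ν μ := fun μ => hsym μ ν
      simp_rw [this]
      rw [← Finset.sum_mul, hrow ν]; ring
    simp_rw [this]
    rw [← Finset.sum_mul]; ring
  have h3 : ∑ μ : Fin N, ∑ ν, K μ ν = r * N := by
    simp_rw [hrow]
    simp [mul_comm]
  have hexpand : ∑ μ, ∑ ν, K μ ν * (x μ - c) * (x ν - c)
      = (∑ μ, ∑ ν, K μ ν * x μ * x ν) - c * (r * S) - c * (r * S) + c * c * (r * N) := by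
    have hterm : ∀ μ ν, K μ ν * (x μ - c) * (x ν - c)
        = K μ ν * x μ * x ν - c * (K μ ν * x μ) - c * (K μ ν * x ν) + c * c * K μ ν := by
      intro μ ν; ring
    simp_rw [hterm, Finset.sum_add_distrib, Finset.sum_sub_distrib, ← Finset.mul_sum]
    rw [h1, h2, h3]
  rw [hexpand] at hpos
  have hcN : c * N = S := by
    rw [hc]; field_simp
  have hkey : r / N * S ^ 2 = c * c * (r * N) := by
    rw [← hcN]
    field_simp
  have hmid : c * (r * S) = c * c * (r * N) := by
    rw [← hcN]; ring
  linarith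

theorem lower_bounding_parabola {N : ℕ}
    (J : Matrix (Fin N) (Fin N) ℝ) (hJ : J.IsSymm)
    (j : ℝ) (hrow : ∀ μ, ∑ ν, J μ ν = j)
    (jmin : ℝ)
    (hjmin : Module.End.HasEigenvalue (Matrix.toLin' J) jmin)
    (hjmin_le : ∀ x : ℝ, Module.End.HasEigenvalue (Matrix.toLin' J) x → jmin ≤ x)
    (s : Fin N → EuclideanSpace ℝ (Fin 3)) (hstate : ∀ μ, ‖s μ‖ = 1) :
    (j - jmin) / N * ‖∑ μ, s μ‖ ^ 2 + jmin * N ≤ heisenbergEnergy J s := by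
  rcases Nat.eq_zero_or_pos N with hN | hN
  · subst hN
    simp [heisenbergEnergy]
  set K : Matrix (Fin N) (Fin N) ℝ := J - jmin • (1 : Matrix (Fin N) (Fin N) ℝ) with hKdef
  have hKentry : ∀ μ ν, K μ ν = J μ ν - (if μ = ν then jmin else 0) := by
    intro μ ν
    simp [hKdef, Matrix.one_apply, mul_ite]
  have hJsym : ∀ μ ν, J μ ν = J ν μ := by
    intro μ ν
    exact (congrFun (congrFun hJ μ) ν).symm
  have hKsym : ∀ μ ν, K μ ν = K ν μ := by
    intro μ ν
    rw [hKentry, hKentry, hJsym μ ν]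
    by_cases h : μ = ν <;> simp [h, eq_comm]
  have hKrow : ∀ μ, ∑ ν, K μ ν = j - jmin := by
    intro μ
    simp_rw [hKentry]
    rw [Finset.sum_sub_distrib, hrow μ]
    simp
  have hKherm : K.IsHermitian := by
    have h1 : J.IsHermitian := hJ
    refine h1.sub ?_
    unfold Matrix.IsHermitian
    rw [Matrix.conjTranspose_smul]
    simp
  have hPSD : K.PosSemidef := by
    apply hKherm.posSemidef_iff_eigenvalues_nonneg.mpr
    intro i
    have hv := hKherm.mulVec_eigenvectorBasis i
    set lam := hKherm.eigenvalues i with hlam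
    set v : Fin N → ℝ := ⇑(hKherm.eigenvectorBasis i) with hvdef
    have hv0 : v ≠ 0 := by
      have hnorm : ‖hKherm.eigenvectorBasis i‖ = 1 :=
        (hKherm.eigenvectorBasis).orthonormal.1 i
      intro h
      have h0 : hKherm.eigenvectorBasis i = 0 := by
        ext μ
        exact congrFun h μ
      rw [h0] at hnorm
      simp at hnorm
    have hJv : J.mulVec v = (lam + jmin) • v := by
      have hKv : K.mulVec v = J.mulVec v - jmin • v := by
        rw [hKdef, Matrix.sub_mulVec, Matrix.smul_mulVec, Matrix.one_mulVec]
      rw [hKv] at hv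
      have : J.mulVec v = lam • v + jmin • v := by
        rw [← hv]; abel
      rw [this, ← add_smul]
    have heig : Module.End.HasEigenvalue (Matrix.toLin' J) (lam + jmin) := by
      apply Module.End.hasEigenvalue_of_hasEigenvector (x := v)
      constructor
      · rw [Module.End.mem_eigenspace_iff, Matrix.toLin'_apply]
        exact hJv
      · exact hv0
    have := hjmin_le _ heig
    show (0 : ℝ) ≤ lam
    linarith
  have hInner : ∀ (x y : EuclideanSpace ℝ (Fin 3)), ⟪x, y⟫ = ∑ i, x i * y i := by
    intro x y
    simp [PiLp.inner_apply, RCLike.inner_apply, mul_comm]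
  have hEnergy : heisenbergEnergy J s = (∑ μ, ∑ ν, K μ ν * ⟪s μ, s ν⟫) + jmin * N := by
    unfold heisenbergEnergy
    have hterm : ∀ μ ν, J μ ν * ⟪s μ, s ν⟫
        = K μ ν * ⟪s μ, s ν⟫ + (if μ = ν then jmin * ⟪s μ, s ν⟫ else 0) := by
      intro μ ν
      rw [hKentry]
      by_cases h : μ = ν <;> simp [h] <;> ring
    simp_rw [hterm, Finset.sum_add_distrib]
    congr 1
    have : ∀ μ : Fin N, ∑ ν, (if μ = ν then jmin * ⟪s μ, s ν⟫ else 0) = jmin := by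
      intro μ
      rw [Finset.sum_ite_eq]
      simp only [Finset.mem_univ, if_true]
      have : ⟪s μ, s μ⟫ = 1 := by
        rw [real_inner_self_eq_norm_sq, hstate μ]; norm_num
      rw [this, mul_one]
    simp_rw [this]
    simp [mul_comm]
  have hsum_apply : ∀ i : Fin 3, (∑ μ, s μ) i = ∑ μ, s μ i := by
    intro i
    rw [WithLp.ofLp_sum]; exact Finset.sum_apply i Finset.univ _
  have hnorm_sq : ‖∑ μ, s μ‖ ^ 2 = ∑ i : Fin 3, (∑ μ, s μ i) ^ 2 := by
    rw [← real_inner_self_eq_norm_sq, hInner]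
    refine Finset.sum_congr rfl fun i _ => ?_
    rw [hsum_apply i, sq]
  have hmain : (j - jmin) / N * ‖∑ μ, s μ‖ ^ 2 ≤ ∑ μ, ∑ ν, K μ ν * ⟪s μ, s ν⟫ := by
    calc (j - jmin) / N * ‖∑ μ, s μ‖ ^ 2
        = ∑ i : Fin 3, (j - jmin) / N * (∑ μ, s μ i) ^ 2 := by
          rw [hnorm_sq, Finset.mul_sum]
      _ ≤ ∑ i : Fin 3, ∑ μ, ∑ ν, K μ ν * s μ i * s ν i :=
          Finset.sum_le_sum fun i _ =>
            quad_bound hN K hPSD hKsym (j - jmin) hKrow (fun μ => s μ i)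
      _ = ∑ μ, ∑ ν, K μ ν * ⟪s μ, s ν⟫ := by
          have : ∀ μ ν, K μ ν * ⟪s μ, s ν⟫ = ∑ i : Fin 3, K μ ν * s μ i * s ν i := by
            intro μ ν
            rw [hInner, Finset.mul_sum]
            exact Finset.sum_congr rfl fun i _ => by ring
          simp_rw [this]
          rw [Finset.sum_comm]
          exact Finset.sum_congr rfl fun μ _ => Finset.sum_comm
  linarith [hEnergy, hmain]
end

section
/- Let J be a real symmetric N×N matrix with constant row sums j := ∑_ν J_{μν} (independent of μ), and let j_maxi be the largest eigenvalue of the quadratic form x ↦ ⟨x, Jx⟩ restricted to the hyperplane {x ∈ ℝ^N : ∑_μ x_μ = 0}. Then every state s satisfies the upper bounding parabola H₀(s) ≤ ((j − j_maxi)/N)·‖∑_μ s_μ‖² + j_maxi·N. -/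
open scoped RealInnerProductSpace

lemma component_bound {N : ℕ} (hN : 0 < N) (J : Matrix (Fin N) (Fin N) ℝ)
    (hJ : J.IsSymm) (j : ℝ) (hrow : ∀ μ, ∑ ν, J μ ν = j) (jmaxi : ℝ)
    (hmaxi_le : ∀ x : Fin N → ℝ, (∑ μ, x μ) = 0 →
      ∑ μ, ∑ ν, x μ * J μ ν * x ν ≤ jmaxi * ∑ μ, x μ ^ 2)
    (t : Fin N → ℝ) :
    ∑ μ, ∑ ν, J μ ν * t μ * t ν ≤
      jmaxi * ∑ μ, t μ ^ 2 + (j - jmaxi) * N * ((∑ μ, t μ) / N) ^ 2 := by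
  have hNne : (N : ℝ) ≠ 0 := Nat.cast_ne_zero.mpr hN.ne'
  set m : ℝ := (∑ μ, t μ) / N with hm
  have hsum : ∑ μ, t μ = N * m := by
    rw [hm, mul_div_assoc', mul_comm, mul_div_assoc, div_self hNne, mul_one]
  have hcol : ∀ ν, ∑ μ, J μ ν = j := by
    intro ν
    rw [← hrow ν]
    exact Finset.sum_congr rfl fun μ _ => hJ.apply ν μ
  have hx0 : ∑ μ, (t μ - m) = 0 := by
    rw [Finset.sum_sub_distrib, hsum, Finset.sum_const, Finset.card_univ,
      Fintype.card_fin, nsmul_eq_mul]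
    ring
  have hJt : ∑ μ, ∑ ν, J μ ν * t ν = j * (N * m) := by
    rw [Finset.sum_comm]
    calc ∑ ν, ∑ μ, J μ ν * t ν = ∑ ν, (∑ μ, J μ ν) * t ν := by
          simp [Finset.sum_mul]
      _ = ∑ ν, j * t ν := by simp_rw [hcol]
      _ = j * (N * m) := by rw [← Finset.mul_sum, hsum]
  have htJ : ∑ μ, ∑ ν, J μ ν * t μ = j * (N * m) := by
    calc ∑ μ, ∑ ν, J μ ν * t μ = ∑ μ, (∑ ν, J μ ν) * t μ := by
          simp [Finset.sum_mul]
      _ = ∑ μ, j * t μ := by simp_rw [hrow]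
      _ = j * (N * m) := by rw [← Finset.mul_sum, hsum]
  have hJJ : ∑ μ, ∑ ν, J μ ν = N * j := by
    simp_rw [hrow]
    rw [Finset.sum_const, Finset.card_univ, Fintype.card_fin, nsmul_eq_mul]
  have key : ∑ μ, ∑ ν, (t μ - m) * J μ ν * (t ν - m)
      = (∑ μ, ∑ ν, J μ ν * t μ * t ν) - N * j * m ^ 2 := by
    have h1 : ∀ μ ν, (t μ - m) * J μ ν * (t ν - m)
        = J μ ν * t μ * t ν - m * (J μ ν * t ν) - m * (J μ ν * t μ)
          + m * m * J μ ν := fun μ ν => by ring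
    simp_rw [h1, Finset.sum_add_distrib, Finset.sum_sub_distrib, ← Finset.mul_sum]
    rw [hJt, htJ, hJJ]
    ring
  have hx2 : ∑ μ, (t μ - m) ^ 2 = (∑ μ, t μ ^ 2) - N * m ^ 2 := by
    have h2 : ∀ μ, (t μ - m) ^ 2 = t μ ^ 2 - 2 * m * t μ + m * m := fun μ => by ring
    simp_rw [h2, Finset.sum_add_distrib, Finset.sum_sub_distrib, ← Finset.mul_sum,
      hsum, Finset.sum_const, Finset.card_univ, Fintype.card_fin, nsmul_eq_mul]
    ring
  have hle := hmaxi_le (fun μ => t μ - m) hx0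
  rw [key, hx2] at hle
  nlinarith [hle]

theorem upper_bounding_parabola {N : ℕ}
    (J : Matrix (Fin N) (Fin N) ℝ) (hJ : J.IsSymm)
    (j : ℝ) (hrow : ∀ μ, ∑ ν, J μ ν = j)
    (jmaxi : ℝ)
    -- `jmaxi` is the largest eigenvalue of the quadratic form `x ↦ ⟨x, Jx⟩`
    -- restricted to the hyperplane `{x | ∑ μ, x μ = 0}` (Rayleigh characterization):
    (hmaxi_le : ∀ x : Fin N → ℝ, (∑ μ, x μ) = 0 →
      ∑ μ, ∑ ν, x μ * J μ ν * x ν ≤ jmaxi * ∑ μ, x μ ^ 2)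
    (hmaxi_attained : ∃ x : Fin N → ℝ, x ≠ 0 ∧ (∑ μ, x μ) = 0 ∧
      ∑ μ, ∑ ν, x μ * J μ ν * x ν = jmaxi * ∑ μ, x μ ^ 2)
    (s : Fin N → EuclideanSpace ℝ (Fin 3)) (hstate : ∀ μ, ‖s μ‖ = 1) :
    heisenbergEnergy J s ≤ (j - jmaxi) / N * ‖∑ μ, s μ‖ ^ 2 + jmaxi * N := by
  obtain ⟨x0, hx0ne, -, -⟩ := hmaxi_attained
  have hN : 0 < N := by
    rcases Nat.eq_zero_or_pos N with h | h
    · subst h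
      exact absurd (funext fun i => i.elim0) hx0ne
    · exact h
  have hNne : (N : ℝ) ≠ 0 := Nat.cast_ne_zero.mpr hN.ne'
  -- rewrite energy componentwise
  have henergy : heisenbergEnergy J s
      = ∑ i : Fin 3, ∑ μ, ∑ ν, J μ ν * s μ i * s ν i := by
    have h1 : ∀ μ, (∑ ν, J μ ν * ⟪s μ, s ν⟫)
        = ∑ i : Fin 3, ∑ ν, J μ ν * s μ i * s ν i := by
      intro μ
      rw [Finset.sum_comm]
      refine Finset.sum_congr rfl fun ν _ => ?_
      simp only [PiLp.inner_apply, RCLike.inner_apply, conj_trivial, Finset.mul_sum]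
      exact Finset.sum_congr rfl fun i _ => by ring
    rw [heisenbergEnergy]
    simp_rw [h1]
    exact Finset.sum_comm
  have hb : ∀ i : Fin 3, ∑ μ, ∑ ν, J μ ν * s μ i * s ν i ≤
      jmaxi * ∑ μ, (s μ i) ^ 2 + (j - jmaxi) * N * ((∑ μ, s μ i) / N) ^ 2 :=
    fun i => component_bound hN J hJ j hrow jmaxi hmaxi_le (fun μ => s μ i)
  have hnorm : ∀ μ, ∑ i : Fin 3, (s μ i) ^ 2 = 1 := by
    intro μ
    have h := real_inner_self_eq_norm_sq (s μ)
    rw [hstate μ] at h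
    simp only [PiLp.inner_apply, RCLike.inner_apply, conj_trivial] at h
    simpa [sq] using h
  have hT : ∑ i : Fin 3, ∑ μ, (s μ i) ^ 2 = (N : ℝ) := by
    rw [Finset.sum_comm]
    simp_rw [hnorm]
    simp
  have hB : ‖∑ μ, s μ‖ ^ 2 = ∑ i : Fin 3, (∑ μ, s μ i) ^ 2 := by
    have h := real_inner_self_eq_norm_sq (∑ μ, s μ)
    rw [← h]
    have hap : ∀ i : Fin 3, (∑ μ, s μ) i = ∑ μ, s μ i := fun i =>
      by rw [WithLp.ofLp_sum, Finset.sum_apply]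
    simp only [PiLp.inner_apply, RCLike.inner_apply, conj_trivial, hap]
    simp [sq]
  rw [henergy]
  calc ∑ i : Fin 3, ∑ μ, ∑ ν, J μ ν * s μ i * s ν i
      ≤ ∑ i : Fin 3, (jmaxi * ∑ μ, (s μ i) ^ 2
          + (j - jmaxi) * N * ((∑ μ, s μ i) / N) ^ 2) :=
        Finset.sum_le_sum fun i _ => hb i
    _ = jmaxi * (N : ℝ) + (j - jmaxi) * N * (‖∑ μ, s μ‖ ^ 2 / N ^ 2) := by
        rw [Finset.sum_add_distrib, ← Finset.mul_sum, hT, ← Finset.mul_sum]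
        congr 1
        simp_rw [div_pow]
        rw [← Finset.sum_div, ← hB]
    _ = (j - jmaxi) / N * ‖∑ μ, s μ‖ ^ 2 + jmaxi * N := by
        field_simp
        ring
end

section
/- Let G be a group of permutations of {1,…,N} acting transitively, and let J be a real symmetric N×N matrix invariant under G, i.e. J_{g(μ) g(ν)} = J_{μν} for all g ∈ G and all μ, ν. Let s be a symmetric state (for every g ∈ G there exists an orthogonal 3×3 matrix R with s_{g(μ)} = R s_μ for all μ) which is stationary (there exist reals κ_μ with ∑_ν J_{μν} s_ν = κ_μ s_μ for all μ). Then s is weakly symmetric: there is a single constant c ∈ ℝ with ∑_ν J_{μν} s_ν = c s_μ for all μ. -/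
open scoped RealInnerProductSpace
open Matrix

theorem stationary_symmetric_is_weakly_symmetric {N : ℕ}
    (G : Subgroup (Equiv.Perm (Fin N)))
    (htrans : ∀ μ ν : Fin N, ∃ g ∈ G, g μ = ν)
    (J : Matrix (Fin N) (Fin N) ℝ) (hJ : J.IsSymm)
    (hinv : ∀ g ∈ G, ∀ μ ν : Fin N, J (g μ) (g ν) = J μ ν)
    (s : Fin N → EuclideanSpace ℝ (Fin 3)) (hstate : ∀ μ, ‖s μ‖ = 1)
    -- s is symmetric:
    (hsym : ∀ g ∈ G, ∃ R : Matrix (Fin 3) (Fin 3) ℝ,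
      R * Rᵀ = 1 ∧ ∀ μ, s (g μ) = R.mulVec (s μ))
    -- s is stationary:
    (κ : Fin N → ℝ) (hstat : ∀ μ, ∑ ν, J μ ν • s ν = κ μ • s μ) :
    -- then s is weakly symmetric:
    ∃ c : ℝ, ∀ μ, ∑ ν, J μ ν • s ν = c • s μ := by
  have hsne : ∀ μ, s μ ≠ 0 := by
    intro μ h
    have := hstate μ
    rw [h, norm_zero] at this
    norm_num at this
  have key : ∀ g ∈ G, ∀ μ, κ (g μ) = κ μ := by
    intro g hg μ
    obtain ⟨R, hR, hRs⟩ := hsym g hg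
    have h1 : (∑ ν, J (g μ) ν • s ν) = ∑ ν, J μ ν • s (g ν) := by
      rw [← Equiv.sum_comp (g : Equiv.Perm (Fin N)) (fun ν => J (g μ) ν • s ν)]
      simp only [hinv g hg]
    have h2 : ∑ ν, J μ ν • s (g ν) = (κ μ) • s (g μ) := by
      have lin : ∀ (f : Fin N → EuclideanSpace ℝ (Fin 3)),
          R.mulVec (∑ ν, f ν) = ∑ ν, R.mulVec (f ν) := by
        intro f
        exact map_sum (Matrix.mulVecLin R) (fun ν => (f ν).ofLp) Finset.univ
      apply WithLp.ofLp_injective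
      calc ∑ ν, J μ ν • s (g ν) = ∑ ν, J μ ν • R.mulVec (s ν) := by
            simp only [WithLp.ofLp_sum, WithLp.ofLp_smul, hRs]
        _ = ∑ ν, R.mulVec (J μ ν • s ν) := by
            refine Finset.sum_congr rfl fun ν _ => (Matrix.mulVec_smul R (J μ ν) (s ν)).symm
        _ = R.mulVec (∑ ν, J μ ν • s ν) := (lin _).symm
        _ = R.mulVec (κ μ • s μ) := by
            have := congrArg WithLp.ofLp (hstat μ)
            simp only [WithLp.ofLp_sum, WithLp.ofLp_smul] at this
            rw [this]
        _ = κ μ • R.mulVec (s μ) := Matrix.mulVec_smul R (κ μ) (s μ)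
        _ = κ μ • s (g μ) := by rw [hRs]
    have h3 : κ (g μ) • s (g μ) = κ μ • s (g μ) := by
      rw [← hstat (g μ), h1, h2]
    have := sub_eq_zero.mpr h3
    rw [← sub_smul] at this
    rcases smul_eq_zero.mp this with h | h
    · linarith
    · exact absurd h (hsne (g μ))
  cases isEmpty_or_nonempty (Fin N) with
  | inl h => exact ⟨0, fun μ => (h.false μ).elim⟩
  | inr h =>
    obtain ⟨μ₀⟩ := h
    refine ⟨κ μ₀, fun μ => ?_⟩
    obtain ⟨g, hg, hgμ⟩ := htrans μ₀ μ
    rw [hstat μ, ← hgμ, key g hg μ₀]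
end

section
/- Let G be a group of permutations of {1,…,N}, let s and s' be two states, and let R : G → O(3) assign to each g ∈ G an orthogonal 3×3 matrix such that s_{g(μ)} = R_g s_μ and s'_{g(μ)} = R_g s'_μ for all g ∈ G and all μ. Assume s is isotropic: for every μ there exists g ∈ G with g(μ) = μ such that R_g is a rotation (det R_g = 1) with R_g² ≠ 1 (i.e. a rotation through an angle different from 0 and π). Then for every μ, s'_μ = s_μ or s'_μ = −s_μ. -/
open scoped RealInnerProductSpace
open Matrix

lemma rot_cross' (A : Matrix (Fin 3) (Fin 3) ℝ) (hA : A * Aᵀ = 1) (hd : A.det = 1)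
    (v w : Fin 3 → ℝ) : A *ᵥ (crossProduct v w) = crossProduct (A *ᵥ v) (A *ᵥ w) := by
  funext i
  have h1 : (A *ᵥ (crossProduct v w)) i = (A i) ⬝ᵥ (crossProduct v w) := rfl
  have h2 : (crossProduct (A *ᵥ v) (A *ᵥ w)) i
      = (Pi.single i 1) ⬝ᵥ (crossProduct (A *ᵥ v) (A *ᵥ w)) := by
    simp [single_dotProduct]
  rw [h1, h2, triple_product_eq_det, triple_product_eq_det]
  have key : (![Pi.single i 1, A *ᵥ v, A *ᵥ w] : Matrix (Fin 3) (Fin 3) ℝ)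
      = (Matrix.of ![A i, v, w] : Matrix (Fin 3) (Fin 3) ℝ) * Aᵀ := by
    funext a b
    fin_cases a
    · have := congrFun (congrFun hA i) b
      simp [Matrix.mul_apply, Matrix.one_apply, Fin.sum_univ_three,
        Pi.single_apply] at this ⊢
      rw [this]; simp [eq_comm]
    · simp [Matrix.mul_apply, Matrix.mulVec, dotProduct, Fin.sum_univ_three, mul_comm]
    · simp [Matrix.mul_apply, Matrix.mulVec, dotProduct, Fin.sum_univ_three, mul_comm]
  rw [key, Matrix.det_mul, Matrix.det_transpose, hd, mul_one]
  rfl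

theorem isotropic_state_determined_up_to_sign {N : ℕ}
    (G : Subgroup (Equiv.Perm (Fin N)))
    (s s' : Fin N → EuclideanSpace ℝ (Fin 3))
    (hs : ∀ μ, ‖s μ‖ = 1) (hs' : ∀ μ, ‖s' μ‖ = 1)
    (R : G → Matrix (Fin 3) (Fin 3) ℝ)
    (hR : ∀ g : G, R g * (R g)ᵀ = 1)
    (hcov : ∀ g : G, ∀ μ, s ((g : Equiv.Perm (Fin N)) μ) = (R g).mulVec (s μ))
    (hcov' : ∀ g : G, ∀ μ, s' ((g : Equiv.Perm (Fin N)) μ) = (R g).mulVec (s' μ))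
    -- s is isotropic:
    (hiso : ∀ μ : Fin N, ∃ g : G, (g : Equiv.Perm (Fin N)) μ = μ ∧
      (R g).det = 1 ∧ R g * R g ≠ 1) :
    ∀ μ, s' μ = s μ ∨ s' μ = -s μ := by
  intro μ
  obtain ⟨g, hfix, hdet, hg2⟩ := hiso μ
  set A := R g with hA
  by_contra hcon
  push_neg at hcon
  obtain ⟨h1, h2⟩ := hcon
  set v : Fin 3 → ℝ := (s μ).ofLp with hv
  set w : Fin 3 → ℝ := (s' μ).ofLp with hw
  have hAv : A *ᵥ v = v := by
    have := hcov g μ; rw [hfix] at this; exact this.symm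
  have hAw : A *ᵥ w = w := by
    have := hcov' g μ; rw [hfix] at this; exact this.symm
  -- inner product
  set t : ℝ := ⟪s μ, s' μ⟫ with ht
  have hvw : v ⬝ᵥ w = t := by
    simp [ht, PiLp.inner_apply, dotProduct, hv, hw, mul_comm]
  have hvv : v ⬝ᵥ v = 1 := by
    have : ⟪s μ, s μ⟫ = 1 := by
      rw [real_inner_self_eq_norm_sq, hs μ]; norm_num
    rw [PiLp.inner_apply] at this
    simpa [dotProduct, hv, pow_two] using this
  have hww : w ⬝ᵥ w = 1 := by
    have : ⟪s' μ, s' μ⟫ = 1 := by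
      rw [real_inner_self_eq_norm_sq, hs' μ]; norm_num
    rw [PiLp.inner_apply] at this
    simpa [dotProduct, hw, pow_two] using this
  have ht1 : t ≠ 1 := by
    intro h
    exact h1 ((inner_eq_one_iff_of_norm_eq_one (hs μ) (hs' μ)).mp (ht ▸ h)).symm
  have ht2 : t ≠ -1 := by
    intro h
    have : ⟪s μ, -s' μ⟫ = 1 := by
      rw [inner_neg_right, ← ht, h]; norm_num
    have := (inner_eq_one_iff_of_norm_eq_one (hs μ) (by simpa using hs' μ)).mp this
    exact h2 (show s' μ = -(s μ) by rw [this]; simp)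
  set u : Fin 3 → ℝ := crossProduct v w with hu
  have hAu : A *ᵥ u = u := by
    rw [hu, rot_cross' A (hR g) hdet, hAv, hAw]
  set M : Matrix (Fin 3) (Fin 3) ℝ := Matrix.of ![v, w, u] with hM
  have hdetM : M.det = 1 - t ^ 2 := by
    have huu : u ⬝ᵥ u = (v ⬝ᵥ v) * (w ⬝ᵥ w) - (v ⬝ᵥ w) ^ 2 := by
      simp [hu, cross_apply, dotProduct, Fin.sum_univ_three]
      ring
    have : M.det = u ⬝ᵥ u := by
      simp [hM, Matrix.det_fin_three, hu, cross_apply, dotProduct, Fin.sum_univ_three]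
      ring
    rw [this, huu, hvv, hww, hvw]; ring
  have hdM : M.det ≠ 0 := by
    rw [hdetM]
    intro h
    have : (1 - t) * (1 + t) = 0 := by ring_nf; linarith [h]
    rcases mul_eq_zero.mp this with h' | h'
    · exact ht1 (by linarith)
    · exact ht2 (by linarith)
  have hMA : M * Aᵀ = M := by
    funext a b
    fin_cases a
    · have := congrFun hAv b
      simp [hM, Matrix.mul_apply, Matrix.mulVec, dotProduct,
        Fin.sum_univ_three] at this ⊢
      linear_combination this
    · have := congrFun hAw b
      simp [hM, Matrix.mul_apply, Matrix.mulVec, dotProduct,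
        Fin.sum_univ_three] at this ⊢
      linear_combination this
    · have := congrFun hAu b
      simp [hM, Matrix.mul_apply, Matrix.mulVec, dotProduct,
        Fin.sum_univ_three] at this ⊢
      linear_combination this
  haveI : Invertible M := M.invertibleOfIsUnitDet (isUnit_iff_ne_zero.mpr hdM)
  have hAT : Aᵀ = 1 := by
    calc Aᵀ = M⁻¹ * (M * Aᵀ) := (Matrix.inv_mul_cancel_left_of_invertible M Aᵀ).symm
    _ = M⁻¹ * M := by rw [hMA]
    _ = 1 := Matrix.inv_mul_of_invertible M
  have hA1 : A = 1 := by
    have : Aᵀᵀ = (1 : Matrix (Fin 3) (Fin 3) ℝ)ᵀ := by rw [hAT]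
    simpa using this
  exact hg2 (by rw [hA1, one_mul])
end

section
/- Let G be a group of permutations of {1,…,N} acting transitively, and let J be a real symmetric N×N matrix invariant under G, i.e. J_{g(μ) g(ν)} = J_{μν} for all g ∈ G and all μ, ν. Let s be a state together with a map R : G → O(3) such that s_{g(μ)} = R_g s_μ for all g ∈ G and all μ, and assume s is isotropic: for every μ there exists g ∈ G with g(μ) = μ such that R_g is a rotation (det R_g = 1) with R_g² ≠ 1. Then s is stationary, and in fact weakly symmetric: there exists a constant c ∈ ℝ with ∑_ν J_{μν} s_ν = c s_μ for all μ. -/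
open scoped RealInnerProductSpace
open Matrix

private lemma cross_mulVec_adj (A : Matrix (Fin 3) (Fin 3) ℝ) (a b : Fin 3 → ℝ) :
    (A.mulVec a) ⨯₃ (A.mulVec b) = (A.adjugate)ᵀ.mulVec (a ⨯₃ b) := by
  funext i
  fin_cases i <;>
    simp [cross_apply, Matrix.mulVec, dotProduct, Fin.sum_univ_three,
      Matrix.adjugate_fin_three, Matrix.transpose_apply] <;> ring

private lemma adjugate_eq_transpose (R : Matrix (Fin 3) (Fin 3) ℝ)
    (hR : R * Rᵀ = 1) (hdet : R.det = 1) : R.adjugate = Rᵀ := by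
  have h1 : R⁻¹ = R.adjugate := by rw [Matrix.inv_def, hdet, Ring.inverse_one, one_smul]
  rw [← h1, Matrix.inv_eq_right_inv hR]

/-- An orthogonal 3×3 matrix with determinant 1 whose square is not the identity has a fixed
space of dimension at most 1. -/
private lemma fixed_collinear (R : Matrix (Fin 3) (Fin 3) ℝ)
    (hR : R * Rᵀ = 1) (hdet : R.det = 1) (h2 : R * R ≠ 1)
    (v w : Fin 3 → ℝ) (hv : R.mulVec v = v) (hw : R.mulVec w = w) (hv0 : v ≠ 0) :
    ∃ t : ℝ, w = t • v := by
  by_contra hcon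
  push_neg at hcon
  -- v, w are linearly independent
  have hind : LinearIndependent ℝ ![w, v] := by
    rw [linearIndependent_fin2]
    refine ⟨hv0, fun a ha => hcon a ?_⟩
    simpa using ha.symm
  have hu0 : w ⨯₃ v ≠ 0 := crossProduct_ne_zero_iff_linearIndependent.mpr hind
  set u : Fin 3 → ℝ := w ⨯₃ v with hu_def
  -- u is also fixed by R
  have hu : R.mulVec u = u := by
    have := cross_mulVec_adj R w v
    rw [hw, hv, adjugate_eq_transpose R hR hdet, Matrix.transpose_transpose] at this
    exact this.symm
  -- the matrix with rows u, w, v is invertible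
  set M : Matrix (Fin 3) (Fin 3) ℝ := ![u, w, v] with hM_def
  have hdetM : M.det ≠ 0 := by
    have h3 : u ⬝ᵥ w ⨯₃ v = M.det := triple_product_eq_det u w v
    rw [← hu_def] at h3
    rw [← h3]
    exact fun h => hu0 (dotProduct_self_eq_zero.mp h)
  -- R fixes each row of M, hence R * Mᵀ = Mᵀ
  have hrow : ∀ j, R.mulVec (M j) = M j := by
    intro j
    fin_cases j <;> simpa [hM_def] using (by assumption : _)
  have hMT : R * Mᵀ = Mᵀ := by
    ext i j
    have := congrFun (hrow j) i
    simpa [Matrix.mul_apply, Matrix.mulVec, dotProduct] using this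
  have hR1 : R = 1 := by
    have hUnit : IsUnit (Mᵀ).det := by
      rw [Matrix.det_transpose]
      exact isUnit_iff_ne_zero.mpr hdetM
    calc R = R * (Mᵀ * (Mᵀ)⁻¹) := by rw [Matrix.mul_nonsing_inv _ hUnit, mul_one]
      _ = (R * Mᵀ) * (Mᵀ)⁻¹ := by rw [mul_assoc]
      _ = Mᵀ * (Mᵀ)⁻¹ := by rw [hMT]
      _ = 1 := Matrix.mul_nonsing_inv _ hUnit
  exact h2 (by rw [hR1, one_mul])

private lemma mulVec_sum_smul {n : ℕ} (A : Matrix (Fin 3) (Fin 3) ℝ)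
    (c : Fin n → ℝ) (f : Fin n → (Fin 3 → ℝ)) :
    A.mulVec (∑ ν, c ν • f ν) = ∑ ν, c ν • A.mulVec (f ν) := by
  rw [← Matrix.mulVecLin_apply, map_sum]
  simp [Matrix.mulVecLin_apply]

theorem isotropic_implies_weakly_symmetric {N : ℕ}
    (G : Subgroup (Equiv.Perm (Fin N)))
    (htrans : ∀ μ ν : Fin N, ∃ g ∈ G, g μ = ν)
    (J : Matrix (Fin N) (Fin N) ℝ) (hJ : J.IsSymm)
    (hinv : ∀ g ∈ G, ∀ μ ν : Fin N, J (g μ) (g ν) = J μ ν)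
    (s : Fin N → EuclideanSpace ℝ (Fin 3)) (hstate : ∀ μ, ‖s μ‖ = 1)
    (R : G → Matrix (Fin 3) (Fin 3) ℝ)
    (hR : ∀ g : G, R g * (R g)ᵀ = 1)
    (hcov : ∀ g : G, ∀ μ, s ((g : Equiv.Perm (Fin N)) μ) = (R g).mulVec (s μ))
    -- s is isotropic:
    (hiso : ∀ μ : Fin N, ∃ g : G, (g : Equiv.Perm (Fin N)) μ = μ ∧
      (R g).det = 1 ∧ R g * R g ≠ 1) :
    -- then s is stationary, and in fact weakly symmetric:
    ∃ c : ℝ, ∀ μ, ∑ ν, J μ ν • s ν = c • s μ := by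
  rcases Nat.eq_zero_or_pos N with h0 | hN
  · subst h0
    exact ⟨0, fun μ => μ.elim0⟩
  -- view everything as plain functions Fin 3 → ℝ
  set H : Fin N → (Fin 3 → ℝ) := fun μ => ∑ ν, J μ ν • s ν with hH_def
  have hcovh : ∀ g : G, ∀ μ, H ((g : Equiv.Perm (Fin N)) μ) = (R g).mulVec (H μ) := by
    intro g μ
    have hre : H ((g : Equiv.Perm (Fin N)) μ) =
        ∑ ν, J ((g : Equiv.Perm (Fin N)) μ) ((g : Equiv.Perm (Fin N)) ν) •
          (s ((g : Equiv.Perm (Fin N)) ν) : Fin 3 → ℝ) :=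
      (Equiv.sum_comp (g : Equiv.Perm (Fin N))
        (fun ν => J ((g : Equiv.Perm (Fin N)) μ) ν • (s ν : Fin 3 → ℝ))).symm
    rw [hre]
    have : ∀ ν, J ((g : Equiv.Perm (Fin N)) μ) ((g : Equiv.Perm (Fin N)) ν) •
        s ((g : Equiv.Perm (Fin N)) ν) = J μ ν • (R g).mulVec (s ν) := by
      intro ν
      rw [hinv g g.2, hcov g]
    rw [Finset.sum_congr rfl (fun ν _ => this ν)]
    exact (mulVec_sum_smul (R g) (fun ν => J μ ν) (fun ν => s ν)).symm
  set μ₀ : Fin N := ⟨0, hN⟩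
  obtain ⟨g₀, hfix, hdet, h2⟩ := hiso μ₀
  have hs0 : (R g₀).mulVec (s μ₀) = s μ₀ := by
    rw [← hcov g₀ μ₀, hfix]
  have hh0 : (R g₀).mulVec (H μ₀) = H μ₀ := by
    rw [← hcovh g₀ μ₀, hfix]
  have hs0ne : (s μ₀ : Fin 3 → ℝ) ≠ 0 := by
    intro h
    have := hstate μ₀
    rw [show s μ₀ = 0 from by simpa using h] at this
    simp at this
  obtain ⟨c, hc⟩ := fixed_collinear (R g₀) (hR g₀) hdet h2 (s μ₀) (H μ₀) hs0 hh0 hs0ne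
  refine ⟨c, fun μ => ?_⟩
  obtain ⟨g, hg, hgμ⟩ := htrans μ₀ μ
  have key : H μ = c • (s μ : Fin 3 → ℝ) := by
    calc H μ = H (((⟨g, hg⟩ : G) : Equiv.Perm (Fin N)) μ₀) := by rw [show ((⟨g, hg⟩ : G) : Equiv.Perm (Fin N)) μ₀ = μ from hgμ]
      _ = (R ⟨g, hg⟩).mulVec (H μ₀) := hcovh ⟨g, hg⟩ μ₀
      _ = (R ⟨g, hg⟩).mulVec (c • (s μ₀ : Fin 3 → ℝ)) := by rw [hc]
      _ = c • (R ⟨g, hg⟩).mulVec (s μ₀) := by rw [Matrix.mulVec_smul]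
      _ = c • (s μ : Fin 3 → ℝ) := by rw [← hcov ⟨g, hg⟩ μ₀, hgμ]
  exact WithLp.ofLp_injective 2 (by simpa [WithLp.ofLp_sum, hH_def] using key)
end

section
/- Let G be a group of permutations of {1,…,N} acting transitively, acting on ℝ^N by permutation of coordinates, and let V ⊆ ℝ^N be a 3-dimensional linear subspace invariant under this action. Then there exists a symmetric state s : {1,…,N} → ℝ³, i.e. ‖s_μ‖ = 1 for all μ and for every g ∈ G there is an orthogonal 3×3 matrix R with s_{g(μ)} = R s_μ for all μ, such that the three coordinate rows of s, namely the vectors (s_1^i, s_2^i, …, s_N^i) ∈ ℝ^N for i = 1, 2, 3, form a basis of V. -/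
open scoped RealInnerProductSpace
open Matrix

private lemma sum_mul_sum_comm' {ι κ σ : Type*} [Fintype ι] [Fintype κ] [Fintype σ]
    (a : ι → κ → ℝ) (c : ι → σ → ℝ) :
    ∑ x, (∑ j, a x j) * (∑ k, c x k) = ∑ j, ∑ k, ∑ x, a x j * c x k := by
  simp_rw [Finset.sum_mul_sum]
  rw [Finset.sum_comm]
  exact Finset.sum_congr rfl fun j _ => Finset.sum_comm

theorem symmetric_state_from_invariant_subspace {N : ℕ}
    (G : Subgroup (Equiv.Perm (Fin N)))
    (htrans : ∀ μ ν : Fin N, ∃ g ∈ G, g μ = ν)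
    (V : Submodule ℝ (Fin N → ℝ))
    (hdim : Module.finrank ℝ V = 3)
    -- V is invariant under the action of G by permutation of coordinates:
    (hinvar : ∀ g ∈ G, ∀ x ∈ V, (fun μ => x (g μ)) ∈ V) :
    ∃ s : Fin N → EuclideanSpace ℝ (Fin 3),
      (∀ μ, ‖s μ‖ = 1) ∧
      (∀ g ∈ G, ∃ R : Matrix (Fin 3) (Fin 3) ℝ,
        R * Rᵀ = 1 ∧ ∀ μ, s (g μ) = R.mulVec (s μ)) ∧
      LinearIndependent ℝ (fun i : Fin 3 => (fun μ => s μ i : Fin N → ℝ)) ∧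
      (∀ i : Fin 3, (fun μ => s μ i : Fin N → ℝ) ∈ V) ∧
      Submodule.span ℝ (Set.range fun i : Fin 3 => (fun μ => s μ i : Fin N → ℝ)) = V := by
  classical
  have hNle : 3 ≤ N := by
    have h1 := Submodule.finrank_le V
    rw [hdim, Module.finrank_fintype_fun_eq_card] at h1
    simpa using h1
  have hN0 : (0 : ℝ) < N := by
    have : 0 < N := by omega
    exact_mod_cast this
  have hNne : (N : ℝ) ≠ 0 := hN0.ne'
  -- View V inside Euclidean space
  set V' : Submodule ℝ (EuclideanSpace ℝ (Fin N)) :=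
    V.comap (WithLp.linearEquiv 2 ℝ (Fin N → ℝ)).toLinearMap with hV'def
  have hdim' : Module.finrank ℝ V' = 3 := by
    rw [hV'def, Submodule.comap_equiv_eq_map_symm, LinearEquiv.finrank_map_eq]; exact hdim
  let b : OrthonormalBasis (Fin 3) ℝ V' :=
    (stdOrthonormalBasis ℝ V').reindex (finCongr hdim')
  let E : Fin 3 → (Fin N → ℝ) := fun i => WithLp.ofLp ((b i : V') : EuclideanSpace ℝ (Fin N))
  have hEV : ∀ i, E i ∈ V := fun i => (b i).2
  have hinner : ∀ i j, (∑ μ, E i μ * E j μ) = if i = j then (1 : ℝ) else 0 := by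
    intro i j
    have h := b.orthonormal
    rw [orthonormal_iff_ite] at h
    have h2 := h i j
    rw [Submodule.coe_inner, PiLp.inner_apply] at h2
    simp [RCLike.inner_apply] at h2
    rw [← h2]; exact Finset.sum_congr rfl fun _ _ => mul_comm _ _
  -- expansion of elements of V in the basis
  have hexp : ∀ v : Fin N → ℝ, v ∈ V → v = ∑ j, (∑ ν, E j ν * v ν) • E j := by
    intro v hv
    have h := congrArg (fun x => WithLp.ofLp (Submodule.subtype V' x)) (b.sum_repr ⟨WithLp.toLp 2 v, hv⟩).symm
    simp only [map_sum, _root_.map_smul, Submodule.subtype_apply, WithLp.ofLp_sum, WithLp.ofLp_smul, WithLp.ofLp_toLp] at h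
    have hc : ∀ j, b.repr ⟨WithLp.toLp 2 v, hv⟩ j = ∑ ν, E j ν * v ν := by
      intro j
      rw [b.repr_apply_apply, Submodule.coe_inner, PiLp.inner_apply]
      simp [RCLike.inner_apply, mul_comm]
      rfl
    rw [Finset.sum_congr rfl fun j _ => by rw [hc j]] at h
    exact h
  -- key construction for each g
  have key : ∀ g ∈ G, ∃ R : Matrix (Fin 3) (Fin 3) ℝ,
      R * Rᵀ = 1 ∧ (∀ j k, (∑ i, R i j * R i k) = if j = k then (1:ℝ) else 0) ∧
      (∀ i μ, E i (g μ) = ∑ j, R i j * E j μ) := by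
    intro g hg
    set f : Fin 3 → (Fin N → ℝ) := fun i => fun μ => E i (g μ) with hfdef
    have hfV : ∀ i, f i ∈ V := fun i => hinvar g hg (E i) (hEV i)
    have hfinner : ∀ i j, (∑ μ, f i μ * f j μ) = if i = j then (1:ℝ) else 0 := by
      intro i j
      rw [← hinner i j]
      exact Equiv.sum_comp (g : Equiv.Perm (Fin N)) (fun μ => E i μ * E j μ)
    set R : Matrix (Fin 3) (Fin 3) ℝ := Matrix.of fun i j => ∑ ν, E j ν * f i ν with hRdef
    have hfe : ∀ i μ, f i μ = ∑ j, R i j * E j μ := by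
      intro i μ
      conv_lhs => rw [hexp (f i) (hfV i)]
      simp [Finset.sum_apply, hRdef]
    have horth : ∀ i j, (∑ k, R i k * R j k) = if i = j then (1:ℝ) else 0 := by
      intro i j
      rw [← hfinner i j]
      calc (∑ k, R i k * R j k)
          = ∑ k, ∑ l, (R i k * R j l) * ∑ μ, E k μ * E l μ := by
            symm
            apply Finset.sum_congr rfl; intro k _
            rw [Finset.sum_congr rfl fun l _ => by rw [hinner]]
            simp [mul_ite, Finset.sum_ite_eq]
        _ = ∑ k, ∑ l, ∑ μ, (R i k * E k μ) * (R j l * E l μ) := by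
            apply Finset.sum_congr rfl; intro k _
            apply Finset.sum_congr rfl; intro l _
            rw [Finset.mul_sum]
            exact Finset.sum_congr rfl fun μ _ => by ring
        _ = ∑ μ, f i μ * f j μ := by
            rw [← sum_mul_sum_comm' (fun μ k => R i k * E k μ) (fun μ l => R j l * E l μ)]
            exact Finset.sum_congr rfl fun μ _ => by rw [hfe i μ, hfe j μ]
    have hR1 : R * Rᵀ = 1 := by
      ext i j
      simp [Matrix.mul_apply, Matrix.one_apply, horth i j]
    have hR2 : ∀ j k, (∑ i, R i j * R i k) = if j = k then (1:ℝ) else 0 := by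
      intro j k
      have h := mul_eq_one_comm.mp hR1
      have h2 := Matrix.ext_iff.mpr h j k
      simpa [Matrix.mul_apply, Matrix.one_apply] using h2
    exact ⟨R, hR1, hR2, fun i μ => hfe i μ⟩
  -- the squared norm function is constant
  have hqg : ∀ g ∈ G, ∀ μ, (∑ i, E i (g μ) * E i (g μ)) = ∑ i, E i μ * E i μ := by
    intro g hg μ
    obtain ⟨R, hR1, hR2, hRe⟩ := key g hg
    calc (∑ i, E i (g μ) * E i (g μ))
        = ∑ i, (∑ j, R i j * E j μ) * (∑ k, R i k * E k μ) :=
          Finset.sum_congr rfl fun i _ => by rw [hRe i μ]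
      _ = ∑ j, ∑ k, ∑ i, (R i j * E j μ) * (R i k * E k μ) :=
          sum_mul_sum_comm' (fun i j => R i j * E j μ) (fun i k => R i k * E k μ)
      _ = ∑ j, ∑ k, (E j μ * E k μ) * ∑ i, R i j * R i k := by
          apply Finset.sum_congr rfl; intro j _
          apply Finset.sum_congr rfl; intro k _
          rw [Finset.mul_sum]
          exact Finset.sum_congr rfl fun i _ => by ring
      _ = ∑ i, E i μ * E i μ := by
          rw [Finset.sum_congr rfl fun j _ => Finset.sum_congr rfl fun k _ => by rw [hR2]]
          simp [mul_ite, Finset.sum_ite_eq]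
  have hqconst : ∀ μ ν, (∑ i, E i μ * E i μ) = ∑ i, E i ν * E i ν := by
    intro μ ν
    obtain ⟨g, hg, hgμ⟩ := htrans μ ν
    rw [← hgμ]
    exact (hqg g hg μ).symm
  have hqsum : (∑ μ, ∑ i, E i μ * E i μ) = 3 := by
    rw [Finset.sum_comm]
    simp [hinner]
  have hqval : ∀ μ, (∑ i, E i μ * E i μ) = 3 / N := by
    intro μ
    have h1 : (∑ ν, ∑ i, E i ν * E i ν) = N * ∑ i, E i μ * E i μ := by
      rw [Finset.sum_congr rfl fun ν _ => hqconst ν μ]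
      simp [Finset.sum_const, Fintype.card_fin, nsmul_eq_mul]
    rw [hqsum] at h1
    field_simp
    simp only [sq]
    linarith
  -- the state
  set c : ℝ := Real.sqrt (3 / N) with hcdef
  have hc0 : 0 < c := Real.sqrt_pos.mpr (by positivity)
  have hcne : c ≠ 0 := hc0.ne'
  have hc2 : c ^ 2 = 3 / N := Real.sq_sqrt (by positivity)
  set s : Fin N → EuclideanSpace ℝ (Fin 3) := fun μ => WithLp.toLp 2 (fun i => c⁻¹ * E i μ) with hsdef
  have hs_apply : ∀ μ i, s μ i = c⁻¹ * E i μ := fun μ i => rfl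
  refine ⟨s, ?_, ?_, ?_, ?_, ?_⟩
  · -- norms
    intro μ
    rw [EuclideanSpace.norm_eq]
    have h8 : (∑ i, ‖s μ i‖ ^ 2) = (c⁻¹) ^ 2 * ∑ i, E i μ * E i μ := by
      rw [Finset.mul_sum]
      apply Finset.sum_congr rfl; intro i _
      rw [hs_apply, Real.norm_eq_abs, sq_abs]
      ring
    rw [h8, hqval μ, ← hc2]
    rw [show (c⁻¹) ^ 2 * c ^ 2 = 1 by field_simp]
    exact Real.sqrt_one
  · -- symmetry
    intro g hg
    obtain ⟨R, hR1, hR2, hRe⟩ := key g hg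
    refine ⟨R, hR1, fun μ => ?_⟩
    funext i
    rw [show (R.mulVec (s μ)) i = ∑ j, R i j * s μ j from rfl]
    rw [hs_apply, hRe i μ, Finset.mul_sum]
    exact Finset.sum_congr rfl fun j _ => by rw [hs_apply]; ring
  · -- linear independence
    have hEli : LinearIndependent ℝ E := by
      have h1 := b.toBasis.linearIndependent
      have h2 := h1.map' V'.subtype (Submodule.ker_subtype V')
      have h3 : (⇑V'.subtype ∘ ⇑b.toBasis) = fun i => ((b i : V') : EuclideanSpace ℝ (Fin N)) := by
        funext i
        simp [OrthonormalBasis.coe_toBasis]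
      rw [h3] at h2
      exact h2.map' (WithLp.linearEquiv 2 ℝ (Fin N → ℝ)).toLinearMap (LinearEquiv.ker _)
    have h4 := hEli.units_smul (fun _ => Units.mk0 c⁻¹ (inv_ne_zero hcne))
    have h5 : ((fun _ => Units.mk0 c⁻¹ (inv_ne_zero hcne) : Fin 3 → ℝˣ) • E)
        = fun i : Fin 3 => (fun μ => s μ i : Fin N → ℝ) := by
      funext i μ
      simp [hs_apply, Units.smul_def, smul_eq_mul]
    rw [h5] at h4
    exact h4
  · -- membership
    intro i
    have h6 : (fun μ => s μ i : Fin N → ℝ) = c⁻¹ • E i := by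
      funext μ
      simp [hs_apply, smul_eq_mul]
    rw [h6]
    exact V.smul_mem _ (hEV i)
  · -- span
    have hE' : Submodule.span ℝ
        (Set.range (fun i => ((b i : V') : EuclideanSpace ℝ (Fin N)))) = V' := by
      have h3 : Set.range (fun i => ((b i : V') : EuclideanSpace ℝ (Fin N)))
          = ⇑V'.subtype '' Set.range ⇑b.toBasis := by
        rw [← Set.range_comp]
        apply congrArg
        funext i
        simp [OrthonormalBasis.coe_toBasis]
      rw [h3, Submodule.span_image, b.toBasis.span_eq, Submodule.map_top,
        Submodule.range_subtype]
    have hspanE : Submodule.span ℝ (Set.range E) = V := by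
      have := congrArg (Submodule.map (WithLp.linearEquiv 2 ℝ (Fin N → ℝ)).toLinearMap) hE'
      have h7 : Submodule.map (WithLp.linearEquiv 2 ℝ (Fin N → ℝ)).toLinearMap V' = V :=
        Submodule.map_comap_eq_of_surjective (WithLp.linearEquiv 2 ℝ (Fin N → ℝ)).surjective V
      rw [Submodule.map_span, ← Set.range_comp, h7] at this
      exact this
    have h6 : (fun i : Fin 3 => (fun μ => s μ i : Fin N → ℝ)) = fun i => c⁻¹ • E i := by
      funext i μ
      simp [hs_apply, smul_eq_mul]
    rw [h6, Set.range_smul,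
      Submodule.span_smul_eq_of_isUnit _ _ (isUnit_iff_ne_zero.mpr (inv_ne_zero hcne)),
      hspanE]
end

section
/- Let N ≥ 3 be odd and J > 0, and consider the spin ring of N spins with nearest-neighbor coupling, whose energy is H₀(s) = 2J ∑_{μ=0}^{N−1} ⟨s_μ, s_{μ+1 mod N}⟩. Then the minimal energy over all states equals 2JN·cos((N−1)π/N): every state s satisfies H₀(s) ≥ 2JN·cos((N−1)π/N), and there is a (coplanar, star-polygon) state attaining this value. -/
open scoped RealInnerProductSpace
open Finset Complex

private lemma conj_std' {n : ℕ} [NeZero n] (a : ZMod n) :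
    (starRingEnd ℂ) (ZMod.stdAddChar a) = ZMod.stdAddChar (-a) := by
  rw [ZMod.stdAddChar_apply, ZMod.stdAddChar_apply, AddChar.map_neg_eq_inv]
  simp [← Circle.coe_inv_eq_conj]

private lemma orth' {n : ℕ} [NeZero n] (b : ZMod n) :
    ∑ k : ZMod n, ZMod.stdAddChar (b * k) = if b = 0 then (n : ℂ) else 0 := by
  simp_rw [mul_comm b]
  rw [AddChar.sum_mulShift b (ZMod.isPrimitive_stdAddChar n)]
  simp [ZMod.card]

private lemma dft_sum' {n : ℕ} [NeZero n] (x : ZMod n → ℝ) (d : ZMod n) :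
    ∑ k : ZMod n, ZMod.stdAddChar (d * k) *
      ((∑ μ : ZMod n, (x μ : ℂ) * ZMod.stdAddChar (μ * k)) *
       (starRingEnd ℂ) (∑ μ : ZMod n, (x μ : ℂ) * ZMod.stdAddChar (μ * k))) =
    (n : ℂ) * ∑ μ : ZMod n, (x μ : ℂ) * (x (μ + d) : ℂ) := by
  simp_rw [map_sum, map_mul, Complex.conj_ofReal, conj_std', Finset.sum_mul_sum,
    Finset.mul_sum]
  have h1 : ∀ (k μ ν : ZMod n),
      ZMod.stdAddChar (d * k) * ((x μ : ℂ) * ZMod.stdAddChar (μ * k) *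
        ((x ν : ℂ) * ZMod.stdAddChar (-(ν * k)))) =
      (x μ : ℂ) * (x ν : ℂ) * ZMod.stdAddChar ((d + μ - ν) * k) := by
    intro k μ ν
    rw [show (d + μ - ν) * k = d * k + (μ * k + -(ν * k)) by ring,
      AddChar.map_add_eq_mul, AddChar.map_add_eq_mul]
    ring
  simp_rw [h1]
  rw [Finset.sum_comm]
  have h2 : ∀ μ : ZMod n, ∑ k : ZMod n, ∑ ν : ZMod n,
      (x μ : ℂ) * (x ν : ℂ) * ZMod.stdAddChar ((d + μ - ν) * k) =
      (n : ℂ) * ((x μ : ℂ) * (x (μ + d) : ℂ)) := by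
    intro μ
    rw [Finset.sum_comm]
    have h3 : ∀ ν : ZMod n, ∑ k : ZMod n,
        (x μ : ℂ) * (x ν : ℂ) * ZMod.stdAddChar ((d + μ - ν) * k) =
        (x μ : ℂ) * (x ν : ℂ) * (if ν = μ + d then (n:ℂ) else 0) := by
      intro ν
      rw [← Finset.mul_sum, orth']
      have he : (d + μ - ν = 0) ↔ (ν = μ + d) := by
        rw [sub_eq_zero]
        constructor <;> intro h <;> simp [h, add_comm]
      simp only [he]
    simp_rw [h3]
    simp [Finset.sum_ite_eq', mul_comm]
  simp_rw [h2]

private lemma cos_bound' {n : ℕ} [NeZero n] (hodd : Odd n) (v : ℕ) (hv : v < n) :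
    Real.cos (((n : ℝ) - 1) * Real.pi / n) ≤ Real.cos (2 * Real.pi * v / n) := by
  have hn : 0 < (n : ℝ) := Nat.cast_pos.2 (Nat.pos_of_ne_zero (NeZero.ne n))
  have hn1 : 1 ≤ n := Nat.one_le_iff_ne_zero.2 (NeZero.ne n)
  have key : ∀ w : ℕ, 2 * w + 1 ≤ n →
      Real.cos (((n : ℝ) - 1) * Real.pi / n) ≤ Real.cos (2 * Real.pi * w / n) := by
    intro w hw
    apply Real.cos_le_cos_of_nonneg_of_le_pi
    · positivity
    · rw [div_le_iff₀ hn]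
      nlinarith [Real.pi_pos]
    · rw [div_le_div_iff₀ hn hn]
      have hw' : (2 * w : ℝ) ≤ (n : ℝ) - 1 := by
        have : ((2 * w : ℕ) : ℝ) ≤ ((n - 1 : ℕ) : ℝ) := Nat.cast_le.2 (by omega)
        push_cast [Nat.cast_sub hn1] at this
        linarith
      have h5 : (2 * w : ℝ) * (Real.pi * n) ≤ ((n:ℝ) - 1) * (Real.pi * n) :=
        mul_le_mul_of_nonneg_right hw' (by positivity)
      nlinarith [h5]
  rcases le_or_gt (2 * v + 1) n with h1 | h1
  · exact key v h1
  · have h2v : 2 * v ≠ n := by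
      rintro rfl
      exact (Nat.not_odd_iff_even.2 ⟨v, by ring⟩) hodd
    have h2 : 2 * (n - v) + 1 ≤ n := by omega
    have heq : 2 * Real.pi * v / n = 2 * Real.pi - 2 * Real.pi * (n - v : ℕ) / n := by
      push_cast [Nat.cast_sub hv.le]
      field_simp
      ring
    rw [heq, Real.cos_two_pi_sub]
    exact key _ h2

private lemma key_ineq' {n : ℕ} [NeZero n] (hodd : Odd n) (x : ZMod n → ℝ) :
    Real.cos (((n : ℝ) - 1) * Real.pi / n) * ∑ μ : ZMod n, x μ ^ 2 ≤
      ∑ μ : ZMod n, x μ * x (μ + 1) := by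
  set c := Real.cos (((n : ℝ) - 1) * Real.pi / n) with hc
  set X : ZMod n → ℂ := fun k => ∑ μ : ZMod n, (x μ : ℂ) * ZMod.stdAddChar (μ * k) with hX
  set F : ZMod n → ℝ := fun k => Complex.normSq (X k) with hF
  have hmc : ∀ k, X k * (starRingEnd ℂ) (X k) = (F k : ℂ) := fun k => Complex.mul_conj _
  have hn : 0 < (n : ℝ) := Nat.cast_pos.2 (Nat.pos_of_ne_zero (NeZero.ne n))
  have P0 : ∑ k, (F k : ℂ) = (n : ℂ) * ∑ μ : ZMod n, (x μ : ℂ) * (x μ : ℂ) := by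
    have h := dft_sum' x 0
    simp only [zero_mul, AddChar.map_zero_eq_one, one_mul, add_zero] at h
    rw [← h]
    exact Finset.sum_congr rfl fun k _ => (hmc k).symm
  have P0R : ∑ k, F k = n * ∑ μ : ZMod n, x μ ^ 2 := by
    have h := P0
    have : ((∑ k, F k : ℝ) : ℂ) = ((n * ∑ μ : ZMod n, x μ ^ 2 : ℝ) : ℂ) := by
      push_cast
      simpa [pow_two] using h
    exact_mod_cast this
  have P1 : ∑ k, ZMod.stdAddChar k * (F k : ℂ) =
      (n : ℂ) * ∑ μ : ZMod n, (x μ : ℂ) * (x (μ + 1) : ℂ) := by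
    have h := dft_sum' x 1
    simp only [one_mul] at h
    rw [← h]
    exact Finset.sum_congr rfl fun k _ => by rw [hmc k]
  have P1R : ∑ k, (ZMod.stdAddChar k).re * F k = n * ∑ μ : ZMod n, x μ * x (μ + 1) := by
    have h := congrArg Complex.re P1
    have hr : ((n : ℂ) * ∑ μ : ZMod n, (x μ : ℂ) * (x (μ + 1) : ℂ)) =
        ((n * ∑ μ : ZMod n, x μ * x (μ + 1) : ℝ) : ℂ) := by push_cast; ring
    rw [hr, Complex.ofReal_re] at h
    rw [← h, Complex.re_sum]
    congr 1
    ext k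
    simp [Complex.mul_re]
  have hbound : ∀ k : ZMod n, c * F k ≤ (ZMod.stdAddChar k).re * F k := by
    intro k
    apply mul_le_mul_of_nonneg_right _ (Complex.normSq_nonneg _)
    have : (ZMod.stdAddChar k).re = Real.cos (2 * Real.pi * k.val / n) := by
      rw [ZMod.stdAddChar_apply, ZMod.toCircle_apply,
        show 2 * Real.pi * Complex.I * k.val / n =
          ((2 * Real.pi * k.val / n : ℝ) : ℂ) * Complex.I by push_cast; ring,
        Complex.exp_ofReal_mul_I_re]
    rw [this, hc]
    exact cos_bound' hodd k.val (ZMod.val_lt k)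
  have hfinal : (n : ℝ) * (c * ∑ μ : ZMod n, x μ ^ 2) ≤
      (n : ℝ) * ∑ μ : ZMod n, x μ * x (μ + 1) := by
    calc (n : ℝ) * (c * ∑ μ : ZMod n, x μ ^ 2) = c * (n * ∑ μ : ZMod n, x μ ^ 2) := by ring
    _ = c * ∑ k, F k := by rw [P0R]
    _ = ∑ k, c * F k := Finset.mul_sum _ _ _
    _ ≤ ∑ k, (ZMod.stdAddChar k).re * F k := Finset.sum_le_sum fun k _ => hbound k
    _ = (n : ℝ) * ∑ μ : ZMod n, x μ * x (μ + 1) := P1R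
  exact le_of_mul_le_mul_left hfinal hn

private lemma inner_eq' (x y : EuclideanSpace ℝ (Fin 3)) : ⟪x, y⟫ = ∑ i, x i * y i := by
  simp [PiLp.inner_apply, RCLike.inner_apply, starRingEnd_apply]
  exact Finset.sum_congr rfl fun _ _ => mul_comm _ _

theorem spin_ring_odd_ground_state_energy {N : ℕ} [NeZero N]
    (hN : 3 ≤ N) (hNodd : Odd N) (J : ℝ) (hJ : 0 < J) :
    (∀ s : Fin N → EuclideanSpace ℝ (Fin 3), (∀ μ, ‖s μ‖ = 1) →
      2 * J * N * Real.cos ((N - 1) * Real.pi / N) ≤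
        2 * J * ∑ μ : Fin N, ⟪s μ, s (μ + 1)⟫) ∧
    ∃ s : Fin N → EuclideanSpace ℝ (Fin 3), (∀ μ, ‖s μ‖ = 1) ∧
      (∃ n : EuclideanSpace ℝ (Fin 3), n ≠ 0 ∧ ∀ μ, ⟪n, s μ⟫ = 0) ∧
      2 * J * ∑ μ : Fin N, ⟪s μ, s (μ + 1)⟫ =
        2 * J * N * Real.cos ((N - 1) * Real.pi / N) := by
  constructor
  · -- lower bound
    obtain ⟨m, rfl⟩ : ∃ m, N = m + 1 := ⟨N - 1, by omega⟩
    intro s hs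
    set c := Real.cos (((m + 1 : ℕ) - 1 : ℝ) * Real.pi / (m + 1 : ℕ)) with hc
    have hnorm : ∀ μ : Fin (m+1), ∑ i : Fin 3, (s μ i)^2 = 1 := by
      intro μ
      have h1 : ⟪s μ, s μ⟫ = 1 := by
        rw [real_inner_self_eq_norm_sq, hs μ]; norm_num
      rw [inner_eq'] at h1
      simpa [pow_two] using h1
    have key3 : ∀ i : Fin 3,
        c * ∑ μ : ZMod (m+1), (s μ i)^2 ≤
          ∑ μ : ZMod (m+1), s μ i * s ((μ + 1 : ZMod (m+1))) i :=
      fun i => key_ineq' hNodd (fun μ => s μ i)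
    have e1 : ∑ μ : Fin (m+1), ⟪s μ, s (μ + 1)⟫ =
        ∑ i : Fin 3, ∑ μ : ZMod (m+1), s μ i * s ((μ + 1 : ZMod (m+1))) i := by
      rw [show ∑ μ : Fin (m+1), ⟪s μ, s (μ + 1)⟫ =
          ∑ μ : ZMod (m+1), ⟪s μ, s ((μ + 1 : ZMod (m+1)))⟫ from rfl]
      simp_rw [inner_eq']
      rw [Finset.sum_comm]
    have e3 : ∑ i : Fin 3, ∑ μ : ZMod (m+1), (s μ i)^2 = ((m + 1 : ℕ) : ℝ) := by
      rw [Finset.sum_comm]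
      rw [Finset.sum_congr rfl fun (μ : ZMod (m+1)) _ => hnorm μ]
      simp [Finset.card_univ, ZMod.card]
    have main : c * ((m + 1 : ℕ) : ℝ) ≤ ∑ μ : Fin (m+1), ⟪s μ, s (μ + 1)⟫ := by
      rw [e1]
      calc c * ((m + 1 : ℕ) : ℝ) = ∑ i : Fin 3, c * ∑ μ : ZMod (m+1), (s μ i)^2 := by
            rw [← Finset.mul_sum, e3]
      _ ≤ ∑ i : Fin 3, ∑ μ : ZMod (m+1), s μ i * s ((μ + 1 : ZMod (m+1))) i :=
            Finset.sum_le_sum fun i _ => key3 i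
    have h2J : (0:ℝ) ≤ 2 * J := by linarith
    have := mul_le_mul_of_nonneg_left main h2J
    calc 2 * J * ((m+1:ℕ):ℝ) * c = 2 * J * (c * ((m+1:ℕ):ℝ)) := by ring
    _ ≤ 2 * J * ∑ μ : Fin (m+1), ⟪s μ, s (μ + 1)⟫ := this
  · -- construction
    set θ := (((N : ℕ) : ℝ) - 1) * Real.pi / ((N : ℕ) : ℝ) with hθ
    set s : Fin N → EuclideanSpace ℝ (Fin 3) := fun μ =>
      (WithLp.equiv 2 (Fin 3 → ℝ)).symm
        ![Real.cos (μ.val * θ), Real.sin (μ.val * θ), 0] with hsdef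
    have hsapp : ∀ (μ : Fin N) (i : Fin 3),
        s μ i = ![Real.cos (μ.val * θ), Real.sin (μ.val * θ), 0] i := fun μ i => rfl
    have hunit : ∀ μ, ‖s μ‖ = 1 := by
      intro μ
      rw [EuclideanSpace.norm_eq]
      rw [Fin.sum_univ_three]
      simp only [hsapp, Matrix.cons_val_zero, Matrix.cons_val_one, Matrix.head_cons,
        Matrix.cons_val_two, Matrix.tail_cons, Real.norm_eq_abs, sq_abs]
      rw [show Real.cos (μ.val * θ) ^ 2 + Real.sin (μ.val * θ) ^ 2 + (0:ℝ) ^ 2 =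
        Real.cos (μ.val * θ) ^ 2 + Real.sin (μ.val * θ) ^ 2 by simp [sq_abs]]
      rw [Real.cos_sq_add_sin_sq, Real.sqrt_one]
    have hterm : ∀ μ : Fin N, ⟪s μ, s (μ + 1)⟫ = Real.cos θ := by
      intro μ
      rw [inner_eq', Fin.sum_univ_three]
      simp only [hsapp, Matrix.cons_val_zero, Matrix.cons_val_one, Matrix.head_cons,
        Matrix.cons_val_two, Matrix.tail_cons, mul_zero, add_zero]
      rw [← Real.cos_sub]
      have hval : ((μ + 1 : Fin N)).val = (μ.val + 1) % N := by
        rw [Fin.add_def]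
        simp only [Fin.val_mk, Fin.val_one']
        rw [Nat.mod_eq_of_lt (show 1 < N by omega)]
      by_cases hcase : μ.val + 1 < N
      · rw [hval, Nat.mod_eq_of_lt hcase]
        rw [show (μ.val : ℝ) * θ - ((μ.val + 1 : ℕ) : ℝ) * θ = -θ by push_cast; ring]
        rw [Real.cos_neg]
      · have hμN : μ.val + 1 = N := by have := μ.isLt; omega
        rw [hval, hμN, Nat.mod_self]
        obtain ⟨k, hk⟩ := hNodd
        have hNr : ((N : ℕ) : ℝ) = 2 * (k : ℝ) + 1 := by rw [hk]; push_cast; ring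
        have hμr : (μ.val : ℝ) = 2 * (k : ℝ) := by
          have : μ.val = 2 * k := by omega
          rw [this]; push_cast; ring
        rw [show ((0:ℕ) : ℝ) * θ = 0 by norm_num, ]
        rw [show (μ.val : ℝ) * θ - 0 = (k : ℤ) * (2 * Real.pi) - θ by
          rw [hμr, hθ, hNr]
          have hden : 2 * (k : ℝ) + 1 ≠ 0 := by positivity
          field_simp
          push_cast
          ring]
        exact Real.cos_int_mul_two_pi_sub θ k
    refine ⟨s, hunit, ⟨(WithLp.equiv 2 (Fin 3 → ℝ)).symm ![0, 0, 1], ?_, ?_⟩, ?_⟩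
    · intro h
      have hn1 : ‖((WithLp.equiv 2 (Fin 3 → ℝ)).symm ![0, 0, 1] :
          EuclideanSpace ℝ (Fin 3))‖ = 1 := by
        rw [EuclideanSpace.norm_eq, Fin.sum_univ_three]
        norm_num
        exact Or.inl rfl
      rw [h, norm_zero] at hn1
      exact one_ne_zero hn1.symm
    · intro μ
      rw [inner_eq', Fin.sum_univ_three]
      simp [hsapp]
    · rw [Finset.sum_congr rfl fun μ _ => hterm μ]
      simp only [Finset.sum_const, Finset.card_univ, Fintype.card_fin, nsmul_eq_mul]
      ring
end
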